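/- arXiv:2507.14522 — 12 statements merged into one kernel-verified Lean document; each statement's English description precedes it below -/
import Mathlib

section
/- Let c : ℝ → ℝ and let u : ℝ × ℝ → ℝ be twice continuously differentiable on {(x,t) : x ≠ 0} and satisfy the wave equation ∂²u/∂t²(x,t) = c(x)² · ∂²u/∂x²(x,t) for all x ≠ 0 and all t. Define σ : ℝ × ℝ → ℝ by σ(X,t) = −X · u(−1/X, t) for X ≠ 0. Then σ satisfies ∂²σ/∂t²(X,t) = X⁴ · c(−1/X)² · ∂²σ/∂X²(X,t) for all X ≠ 0 and all t. -/
/-- First partial derivative with respect to the first argument. -/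
noncomputable def pdx (u : ℝ × ℝ → ℝ) : ℝ × ℝ → ℝ :=
  fun p => deriv (fun x => u (x, p.2)) p.1

/-- First partial derivative with respect to the second argument. -/
noncomputable def pdt (u : ℝ × ℝ → ℝ) : ℝ × ℝ → ℝ :=
  fun p => deriv (fun t => u (p.1, t)) p.2

lemma nz_nhds {X : ℝ} (hX : X ≠ 0) : {x : ℝ | x ≠ 0} ∈ nhds X :=
  (isOpen_compl_singleton.mem_nhds (by simpa using hX) : {x : ℝ | x ≠ 0} ∈ nhds X)

lemma hasDerivAt_neg_inv {x : ℝ} (hx : x ≠ 0) :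
    HasDerivAt (fun y : ℝ => -1 / y) (1 / x ^ 2) x := by
  have h := (hasDerivAt_inv hx).fun_neg
  simpa [neg_div, one_div] using h

lemma keyA (g : ℝ → ℝ) (hg : ContDiffOn ℝ 2 g {x : ℝ | x ≠ 0}) {X : ℝ} (hX : X ≠ 0) :
    deriv (fun x => deriv (fun y => -y * g (-1 / y)) x) X
      = -(1 / X ^ 3) * deriv (deriv g) (-1 / X) := by
  have hgd : ∀ x : ℝ, x ≠ 0 → DifferentiableAt ℝ g x := by
    intro x hx
    exact (hg.contDiffAt (nz_nhds hx)).differentiableAt (by norm_num)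
  have hD : ContDiffOn ℝ 1 (deriv g) {x : ℝ | x ≠ 0} :=
    hg.deriv_of_isOpen isOpen_compl_singleton (by norm_num)
  have hDd : ∀ x : ℝ, x ≠ 0 → DifferentiableAt ℝ (deriv g) x := by
    intro x hx
    exact (hD.contDiffAt (nz_nhds hx)).differentiableAt (by norm_num)
  -- inner formula
  have hinner : ∀ x : ℝ, x ≠ 0 →
      deriv (fun y => -y * g (-1 / y)) x = -g (-1 / x) - deriv g (-1 / x) / x := by
    intro x hx
    have hix : (-1 : ℝ) / x ≠ 0 := by simp [hx]
    have h2 : HasDerivAt g (deriv g (-1 / x)) (-1 / x) := (hgd _ hix).hasDerivAt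
    have h3 : HasDerivAt (fun y => g (-1 / y)) (deriv g (-1 / x) * (1 / x ^ 2)) x :=
      h2.comp x (hasDerivAt_neg_inv hx)
    have h4 : HasDerivAt (fun y : ℝ => -y) (-1) x := (hasDerivAt_id x).neg
    have h5 := h4.fun_mul h3
    rw [h5.deriv]
    field_simp
    ring
  have heq : (fun x => deriv (fun y => -y * g (-1 / y)) x)
      =ᶠ[nhds X] (fun x => -g (-1 / x) - deriv g (-1 / x) / x) :=
    Filter.eventuallyEq_of_mem (nz_nhds hX) hinner
  rw [heq.deriv_eq]
  have hix : (-1 : ℝ) / X ≠ 0 := by simp [hX]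
  have h2 : HasDerivAt g (deriv g (-1 / X)) (-1 / X) := (hgd _ hix).hasDerivAt
  have h3 : HasDerivAt (fun y => -g (-1 / y)) (-(deriv g (-1 / X) * (1 / X ^ 2))) X :=
    (h2.comp X (hasDerivAt_neg_inv hX)).neg
  have h4 : HasDerivAt (deriv g) (deriv (deriv g) (-1 / X)) (-1 / X) := (hDd _ hix).hasDerivAt
  have h5 : HasDerivAt (fun y => deriv g (-1 / y)) (deriv (deriv g) (-1 / X) * (1 / X ^ 2)) X :=
    h4.comp X (hasDerivAt_neg_inv hX)
  have h6 := h5.fun_div (hasDerivAt_id X) hX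
  have h7 := h3.fun_sub h6
  simp only [id_eq] at h7
  rw [h7.deriv]
  field_simp
  ring

theorem stmt_0 (c : ℝ → ℝ) (u σ : ℝ × ℝ → ℝ)
    (hu : ContDiffOn ℝ 2 u {p : ℝ × ℝ | p.1 ≠ 0})
    (hwave : ∀ x t : ℝ, x ≠ 0 →
      pdt (pdt u) (x, t) = (c x) ^ 2 * pdx (pdx u) (x, t))
    (hσ : ∀ X t : ℝ, X ≠ 0 → σ (X, t) = -X * u (-1 / X, t)) :
    ∀ X t : ℝ, X ≠ 0 →
      pdt (pdt σ) (X, t) = X ^ 4 * (c (-1 / X)) ^ 2 * pdx (pdx σ) (X, t) := by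
  intro X t hX
  have hix : (-1 : ℝ) / X ≠ 0 := by simp [hX]
  -- time side
  have hpt : ∀ s : ℝ, pdt σ (X, s) = -X * pdt u (-1 / X, s) := by
    intro s
    have h1 : (fun τ => σ (X, τ)) = fun τ => -X * u (-1 / X, τ) := by
      funext τ; exact hσ X τ hX
    show deriv (fun τ => σ (X, τ)) s = -X * deriv (fun τ => u (-1 / X, τ)) s
    rw [h1, deriv_const_mul_field]
  have hLHS : pdt (pdt σ) (X, t) = -X * pdt (pdt u) (-1 / X, t) := by
    show deriv (fun s => pdt σ (X, s)) t = -X * deriv (fun s => pdt u (-1 / X, s)) t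
    rw [funext hpt, deriv_const_mul_field]
  -- space side
  set g : ℝ → ℝ := fun x => u (x, t) with hgdef
  have hg : ContDiffOn ℝ 2 g {x : ℝ | x ≠ 0} := by
    have hφ : ContDiffOn ℝ 2 (fun x : ℝ => (x, t)) {x : ℝ | x ≠ 0} :=
      (contDiff_id.prodMk contDiff_const).contDiffOn
    exact hu.comp hφ (fun x hx => hx)
  -- pdx σ agrees near X with the derivative of the transformed function
  have hpx : ∀ x : ℝ, x ≠ 0 → pdx σ (x, t) = deriv (fun y => -y * g (-1 / y)) x := by
    intro x hx
    have heq : (fun y => σ (y, t)) =ᶠ[nhds x] (fun y => -y * g (-1 / y)) :=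
      Filter.eventuallyEq_of_mem (nz_nhds hx) (fun y hy => hσ y t hy)
    exact heq.deriv_eq
  have hout : (fun x => pdx σ (x, t)) =ᶠ[nhds X]
      (fun x => deriv (fun y => -y * g (-1 / y)) x) :=
    Filter.eventuallyEq_of_mem (nz_nhds hX) hpx
  have hRHS : pdx (pdx σ) (X, t) = -(1 / X ^ 3) * deriv (deriv g) (-1 / X) := by
    have : pdx (pdx σ) (X, t) = deriv (fun x => pdx σ (x, t)) X := rfl
    rw [this, hout.deriv_eq, keyA g hg hX]
  have hgg : pdx (pdx u) (-1 / X, t) = deriv (deriv g) (-1 / X) := by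
    have : (fun x => pdx u (x, t)) = deriv g := by
      funext x; rfl
    simp only [pdx, this]
    rfl
  rw [hLHS, hwave _ t hix, hRHS, hgg]
  field_simp
end

section
/- Let c : ℝ → ℝ and let u : ℝ × ℝ → ℝ be twice continuously differentiable on {(x,t) : t ≠ 0} and satisfy the wave equation ∂²u/∂t²(x,t) = c(x)² · ∂²u/∂x²(x,t) for all x and all t ≠ 0. Define σ : ℝ × ℝ → ℝ by σ(x,T) = −T · u(x, −1/T) for T ≠ 0. Then σ satisfies ∂²σ/∂T²(x,T) = T⁻⁴ · c(x)² · ∂²σ/∂x²(x,T) for all x and all T ≠ 0. -/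
lemma hasDerivAt_line_t (f : ℝ × ℝ → ℝ) (x t : ℝ) (hf : DifferentiableAt ℝ f (x, t)) :
    HasDerivAt (fun s => f (x, s)) (fderiv ℝ f (x, t) (0, 1)) t := by
  have h := hf.hasFDerivAt.comp_hasDerivAt t ((hasDerivAt_const t x).prodMk (hasDerivAt_id t))
  simpa [Function.comp_def] using h

lemma hasDerivAt_line_x (f : ℝ × ℝ → ℝ) (x t : ℝ) (hf : DifferentiableAt ℝ f (x, t)) :
    HasDerivAt (fun y => f (y, t)) (fderiv ℝ f (x, t) (1, 0)) x := by
  have h := hf.hasFDerivAt.comp_hasDerivAt x ((hasDerivAt_id x).prodMk (hasDerivAt_const x t))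
  simpa [Function.comp_def] using h

lemma hasDerivAt_comp_inv (f : ℝ × ℝ → ℝ) (x T : ℝ) (hT : T ≠ 0)
    (hf : DifferentiableAt ℝ f (x, -1 / T)) :
    HasDerivAt (fun s => f (x, -1 / s)) ((T ^ 2)⁻¹ * fderiv ℝ f (x, -1 / T) (0, 1)) T := by
  have hr : HasDerivAt (fun s : ℝ => -1 / s) ((T ^ 2)⁻¹) T := by
    have := (hasDerivAt_inv hT).fun_neg
    simpa [neg_div, one_div] using this
  have h := hf.hasFDerivAt.comp_hasDerivAt T ((hasDerivAt_const T x).prodMk hr)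
  have hv : ((0 : ℝ), (T ^ 2)⁻¹) = (T ^ 2)⁻¹ • ((0 : ℝ), (1 : ℝ)) := by simp
  rw [hv, map_smul] at h
  simpa [Function.comp_def] using h

theorem stmt_1 (c : ℝ → ℝ) (u σ : ℝ × ℝ → ℝ)
    (hu : ContDiffOn ℝ 2 u {p : ℝ × ℝ | p.2 ≠ 0})
    (hwave : ∀ x t : ℝ, t ≠ 0 →
      pdt (pdt u) (x, t) = (c x) ^ 2 * pdx (pdx u) (x, t))
    (hσ : ∀ x T : ℝ, T ≠ 0 → σ (x, T) = -T * u (x, -1 / T)) :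
    ∀ x T : ℝ, T ≠ 0 →
      pdt (pdt σ) (x, T) = (T ^ 4)⁻¹ * (c x) ^ 2 * pdx (pdx σ) (x, T) := by
  intro x T hT
  have hS : IsOpen {p : ℝ × ℝ | p.2 ≠ 0} := isOpen_ne.preimage continuous_snd
  have hud : ∀ p : ℝ × ℝ, p.2 ≠ 0 → DifferentiableAt ℝ u p := fun p hp =>
    (hu.differentiableOn two_ne_zero).differentiableAt (hS.mem_nhds hp)
  have hF : ∀ p : ℝ × ℝ, p.2 ≠ 0 → DifferentiableAt ℝ (fderiv ℝ u) p := fun p hp =>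
    ((hu.fderiv_of_isOpen hS (m := 1) le_rfl).differentiableOn one_ne_zero).differentiableAt (hS.mem_nhds hp)
  set v : ℝ × ℝ → ℝ := fun p => fderiv ℝ u p (0, 1) with hv_def
  set w : ℝ × ℝ → ℝ := fun p => fderiv ℝ u p (1, 0) with hw_def
  have hv : ∀ p : ℝ × ℝ, p.2 ≠ 0 → DifferentiableAt ℝ v p := fun p hp =>
    (ContinuousLinearMap.apply ℝ ℝ ((0 : ℝ), (1 : ℝ))).differentiableAt.comp p (hF p hp)
  have hw : ∀ p : ℝ × ℝ, p.2 ≠ 0 → DifferentiableAt ℝ w p := fun p hp =>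
    (ContinuousLinearMap.apply ℝ ℝ ((1 : ℝ), (0 : ℝ))).differentiableAt.comp p (hF p hp)
  -- first partials of u agree with v, w on the open set
  have hptu : ∀ p : ℝ × ℝ, p.2 ≠ 0 → pdt u p = v p := fun p hp =>
    (hasDerivAt_line_t u p.1 p.2 (hud p hp)).deriv
  have hpxu : ∀ p : ℝ × ℝ, p.2 ≠ 0 → pdx u p = w p := fun p hp =>
    (hasDerivAt_line_x u p.1 p.2 (hud p hp)).deriv
  have hmT : (-1 : ℝ) / T ≠ 0 := by
    simp [neg_div, hT]
  -- second t-derivative of u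
  have hptt : ∀ x' t : ℝ, t ≠ 0 → pdt (pdt u) (x', t) = fderiv ℝ v (x', t) (0, 1) := by
    intro x' t ht
    have heq : (fun s => pdt u (x', s)) =ᶠ[nhds t] fun s => v (x', s) := by
      filter_upwards [isOpen_ne.mem_nhds ht] with s hs using hptu (x', s) hs
    show deriv (fun s => pdt u (x', s)) t = _
    rw [heq.deriv_eq]
    exact (hasDerivAt_line_t v x' t (hv (x', t) ht)).deriv
  have hpxx : ∀ x' t : ℝ, t ≠ 0 → pdx (pdx u) (x', t) = fderiv ℝ w (x', t) (1, 0) := by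
    intro x' t ht
    have heq : (fun y => pdx u (y, t)) = fun y => w (y, t) :=
      funext fun y => hpxu (y, t) ht
    show deriv (fun y => pdx u (y, t)) x' = _
    rw [heq]
    exact (hasDerivAt_line_x w x' t (hw (x', t) ht)).deriv
  -- first t-derivative of σ
  have hσt : ∀ x' T' : ℝ, T' ≠ 0 →
      pdt σ (x', T') = -u (x', -1 / T') - T'⁻¹ * v (x', -1 / T') := by
    intro x' T' hT'
    have hm : (-1 : ℝ) / T' ≠ 0 := by simp [neg_div, hT']
    have hg : HasDerivAt (fun s => u (x', -1 / s)) ((T' ^ 2)⁻¹ * v (x', -1 / T')) T' :=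
      hasDerivAt_comp_inv u x' T' hT' (hud _ hm)
    have hid : HasDerivAt (fun s : ℝ => -s) (-1) T' := by
      simpa using (hasDerivAt_id T').fun_neg
    have hprod := hid.fun_mul hg
    have heq : (fun s => σ (x', s)) =ᶠ[nhds T'] fun s => -s * u (x', -1 / s) := by
      filter_upwards [isOpen_ne.mem_nhds hT'] with s hs using hσ x' s hs
    show deriv (fun s => σ (x', s)) T' = _
    rw [heq.deriv_eq, hprod.deriv]
    field_simp
    ring
  -- first x-derivative of σ
  have hσx : ∀ x' : ℝ, pdx σ (x', T) = -T * w (x', -1 / T) := by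
    intro x'
    have heq : (fun y => σ (y, T)) = fun y => -T * u (y, -1 / T) :=
      funext fun y => hσ y T hT
    show deriv (fun y => σ (y, T)) x' = _
    rw [heq]
    exact ((hasDerivAt_line_x u x' (-1 / T) (hud _ hmT)).const_mul (-T)).deriv
  -- second x-derivative of σ
  have hσxx : pdx (pdx σ) (x, T) = -T * fderiv ℝ w (x, -1 / T) (1, 0) := by
    have heq : (fun y => pdx σ (y, T)) = fun y => -T * w (y, -1 / T) :=
      funext fun y => hσx y
    show deriv (fun y => pdx σ (y, T)) x = _
    rw [heq]
    exact ((hasDerivAt_line_x w x (-1 / T) (hw _ hmT)).const_mul (-T)).deriv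
  -- second t-derivative of σ
  have hσtt : pdt (pdt σ) (x, T) =
      -(T⁻¹ * ((T ^ 2)⁻¹ * fderiv ℝ v (x, -1 / T) (0, 1))) := by
    have heq : (fun s => pdt σ (x, s)) =ᶠ[nhds T]
        fun s => -u (x, -1 / s) - s⁻¹ * v (x, -1 / s) := by
      filter_upwards [isOpen_ne.mem_nhds hT] with s hs using hσt x s hs
    have h1 : HasDerivAt (fun s => u (x, -1 / s)) ((T ^ 2)⁻¹ * v (x, -1 / T)) T :=
      hasDerivAt_comp_inv u x T hT (hud _ hmT)
    have h2 : HasDerivAt (fun s => v (x, -1 / s))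
        ((T ^ 2)⁻¹ * fderiv ℝ v (x, -1 / T) (0, 1)) T :=
      hasDerivAt_comp_inv v x T hT (hv _ hmT)
    have h3 : HasDerivAt (fun s : ℝ => s⁻¹) (-(T ^ 2)⁻¹) T := hasDerivAt_inv hT
    have htot := (h1.fun_neg).fun_sub (h3.fun_mul h2)
    show deriv (fun s => pdt σ (x, s)) T = _
    rw [heq.deriv_eq, htot.deriv]
    field_simp
    ring
  -- wave equation at (x, -1/T)
  have hwv : fderiv ℝ v (x, -1 / T) (0, 1) =
      (c x) ^ 2 * fderiv ℝ w (x, -1 / T) (1, 0) := by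
    rw [← hptt x (-1 / T) hmT, ← hpxx x (-1 / T) hmT]
    exact hwave x (-1 / T) hmT
  rw [hσtt, hσxx, hwv]
  field_simp
end

section
/- Let c : ℝ → ℝ and let u : ℝ × ℝ → ℝ be twice continuously differentiable on {(x,t) : x ≠ 0 and t ≠ 0} and satisfy the wave equation ∂²u/∂t²(x,t) = c(x)² · ∂²u/∂x²(x,t) for all x ≠ 0 and all t ≠ 0. Define σ : ℝ × ℝ → ℝ by σ(X,T) = X · T · u(−1/X, −1/T) for X ≠ 0, T ≠ 0. Then σ satisfies ∂²σ/∂T²(X,T) = X⁴ · T⁻⁴ · c(−1/X)² · ∂²σ/∂X²(X,T) for all X ≠ 0 and all T ≠ 0. -/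
open Filter


private lemma isOpenS : IsOpen {p : ℝ × ℝ | p.1 ≠ 0 ∧ p.2 ≠ 0} := by
  have : {p : ℝ × ℝ | p.1 ≠ 0 ∧ p.2 ≠ 0}
      = (Prod.fst ⁻¹' {(0:ℝ)}ᶜ) ∩ (Prod.snd ⁻¹' {(0:ℝ)}ᶜ) := by
    ext p; simp
  rw [this]
  exact (isOpen_compl_singleton.preimage continuous_fst).inter
    (isOpen_compl_singleton.preimage continuous_snd)

private lemma slice_t {f : ℝ × ℝ → ℝ} {p : ℝ × ℝ} (hf : DifferentiableAt ℝ f p) :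
    HasDerivAt (fun t => f (p.1, t)) (fderiv ℝ f p (0, 1)) p.2 := by
  have h := hf.hasFDerivAt.comp_hasDerivAt p.2
    ((hasDerivAt_const p.2 p.1).prodMk (hasDerivAt_id p.2))
  simpa [Function.comp_def] using h

private lemma slice_x {f : ℝ × ℝ → ℝ} {p : ℝ × ℝ} (hf : DifferentiableAt ℝ f p) :
    HasDerivAt (fun x => f (x, p.2)) (fderiv ℝ f p (1, 0)) p.1 := by
  have h := hf.hasFDerivAt.comp_hasDerivAt p.1
    ((hasDerivAt_id p.1).prodMk (hasDerivAt_const p.1 p.2))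
  simpa [Function.comp_def] using h

private lemma negInv {t : ℝ} (ht : t ≠ 0) :
    HasDerivAt (fun s : ℝ => -1 / s) ((t ^ 2)⁻¹) t := by
  have := (hasDerivAt_inv ht).neg
  simpa [neg_div, one_div, Pi.neg_def] using this

private lemma comp_t {f : ℝ × ℝ → ℝ} {a t : ℝ} (ht : t ≠ 0)
    (hf : DifferentiableAt ℝ f (a, -1 / t)) :
    HasDerivAt (fun s => f (a, -1 / s)) (fderiv ℝ f (a, -1 / t) (0, 1) * (t ^ 2)⁻¹) t := by
  have h := (slice_t hf).comp t (negInv ht)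
  simpa [Function.comp_def] using h

private lemma comp_x {f : ℝ × ℝ → ℝ} {b t : ℝ} (ht : t ≠ 0)
    (hf : DifferentiableAt ℝ f (-1 / t, b)) :
    HasDerivAt (fun s => f (-1 / s, b)) (fderiv ℝ f (-1 / t, b) (1, 0) * (t ^ 2)⁻¹) t := by
  have h := (slice_x hf).comp t (negInv ht)
  simpa [Function.comp_def] using h

theorem stmt_2 (c : ℝ → ℝ) (u σ : ℝ × ℝ → ℝ)
    (hu : ContDiffOn ℝ 2 u {p : ℝ × ℝ | p.1 ≠ 0 ∧ p.2 ≠ 0})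
    (hwave : ∀ x t : ℝ, x ≠ 0 → t ≠ 0 →
      pdt (pdt u) (x, t) = (c x) ^ 2 * pdx (pdx u) (x, t))
    (hσ : ∀ X T : ℝ, X ≠ 0 → T ≠ 0 → σ (X, T) = X * T * u (-1 / X, -1 / T)) :
    ∀ X T : ℝ, X ≠ 0 → T ≠ 0 →
      pdt (pdt σ) (X, T)
        = X ^ 4 * (T ^ 4)⁻¹ * (c (-1 / X)) ^ 2 * pdx (pdx σ) (X, T) := by
  intro X T hX hT
  set S : Set (ℝ × ℝ) := {p : ℝ × ℝ | p.1 ≠ 0 ∧ p.2 ≠ 0} with hSdef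
  have hud : ∀ p ∈ S, DifferentiableAt ℝ u p := fun p hp =>
    ((hu.differentiableOn (by norm_num)) p hp).differentiableAt (isOpenS.mem_nhds hp)
  have hfd : ContDiffOn ℝ 1 (fderiv ℝ u) S := hu.fderiv_of_isOpen isOpenS (by norm_num)
  have hvtd : ∀ p ∈ S, DifferentiableAt ℝ (fun q => fderiv ℝ u q (0, 1)) p := fun p hp =>
    (((hfd.clm_apply contDiffOn_const).differentiableOn one_ne_zero) p hp).differentiableAt
      (isOpenS.mem_nhds hp)
  have hvxd : ∀ p ∈ S, DifferentiableAt ℝ (fun q => fderiv ℝ u q (1, 0)) p := fun p hp =>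
    (((hfd.clm_apply contDiffOn_const).differentiableOn one_ne_zero) p hp).differentiableAt
      (isOpenS.mem_nhds hp)
  have ha : (-1 / X : ℝ) ≠ 0 := div_ne_zero (by norm_num) hX
  have hb : (-1 / T : ℝ) ≠ 0 := div_ne_zero (by norm_num) hT
  have hmem : ∀ {s : ℝ}, s ≠ 0 → ((-1 / X, -1 / s) : ℝ × ℝ) ∈ S := fun {s} hs =>
    ⟨ha, div_ne_zero (by norm_num) hs⟩
  have hmem' : ∀ {s : ℝ}, s ≠ 0 → ((-1 / s, -1 / T) : ℝ × ℝ) ∈ S := fun {s} hs =>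
    ⟨div_ne_zero (by norm_num) hs, hb⟩
  -- first derivative in t
  have h1t : ∀ t : ℝ, t ≠ 0 → pdt σ (X, t)
      = X * 1 * u (-1 / X, -1 / t)
        + X * t * (fderiv ℝ u (-1 / X, -1 / t) (0, 1) * (t ^ 2)⁻¹) := by
    intro t ht
    have hev : (fun s => σ (X, s)) =ᶠ[nhds t] (fun s => X * s * u (-1 / X, -1 / s)) := by
      filter_upwards [eventually_ne_nhds ht] with s hs
      exact hσ X s hX hs
    have hd := ((hasDerivAt_id t).const_mul X).mul (comp_t ht (hud _ (hmem ht)))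
    exact hev.deriv_eq.trans hd.deriv
  have h1x : ∀ x : ℝ, x ≠ 0 → pdx σ (x, T)
      = 1 * T * u (-1 / x, -1 / T)
        + x * T * (fderiv ℝ u (-1 / x, -1 / T) (1, 0) * (x ^ 2)⁻¹) := by
    intro x hx
    have hev : (fun s => σ (s, T)) =ᶠ[nhds x] (fun s => s * T * u (-1 / s, -1 / T)) := by
      filter_upwards [eventually_ne_nhds hx] with s hs
      exact hσ s T hs hT
    have hd := ((hasDerivAt_id x).mul_const T).mul (comp_x hx (hud _ (hmem' hx)))
    exact hev.deriv_eq.trans hd.deriv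
  -- second derivatives
  have hevt : (fun t => pdt σ (X, t)) =ᶠ[nhds T]
      (fun t => X * 1 * u (-1 / X, -1 / t)
        + X * t * (fderiv ℝ u (-1 / X, -1 / t) (0, 1) * (t ^ 2)⁻¹)) := by
    filter_upwards [eventually_ne_nhds hT] with t ht
    exact h1t t ht
  have hevx : (fun x => pdx σ (x, T)) =ᶠ[nhds X]
      (fun x => 1 * T * u (-1 / x, -1 / T)
        + x * T * (fderiv ℝ u (-1 / x, -1 / T) (1, 0) * (x ^ 2)⁻¹)) := by
    filter_upwards [eventually_ne_nhds hX] with x hx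
    exact h1x x hx
  have hDt := ((comp_t hT (hud _ (hmem hT))).const_mul (X * 1)).add
    (((hasDerivAt_id T).const_mul X).mul
      ((comp_t hT (hvtd _ (hmem hT))).mul ((hasDerivAt_pow 2 T).inv (pow_ne_zero 2 hT))))
  have hDx := ((comp_x hX (hud _ (hmem' hX))).const_mul (1 * T)).add
    (((hasDerivAt_id X).mul_const T).mul
      ((comp_x hX (hvxd _ (hmem' hX))).mul ((hasDerivAt_pow 2 X).inv (pow_ne_zero 2 hX))))
  have h2t := hevt.deriv_eq.trans hDt.deriv
  have h2x := hevx.deriv_eq.trans hDx.deriv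
  simp only [Pi.mul_apply, Pi.inv_apply, id] at h2t h2x
  -- link second partials to fderiv of partials
  have hlink_t : pdt (pdt u) (-1 / X, -1 / T)
      = fderiv ℝ (fun q => fderiv ℝ u q (0, 1)) (-1 / X, -1 / T) (0, 1) := by
    have hev : (fun t => pdt u (-1 / X, t)) =ᶠ[nhds (-1 / T)]
        (fun t => fderiv ℝ u (-1 / X, t) (0, 1)) := by
      filter_upwards [eventually_ne_nhds hb] with t ht
      simpa [pdt] using (slice_t (hud (-1 / X, t) ⟨ha, ht⟩)).deriv
    exact hev.deriv_eq.trans (slice_t (hvtd ((-1 / X, -1 / T) : ℝ × ℝ) ⟨ha, hb⟩)).deriv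
  have hlink_x : pdx (pdx u) (-1 / X, -1 / T)
      = fderiv ℝ (fun q => fderiv ℝ u q (1, 0)) (-1 / X, -1 / T) (1, 0) := by
    have hev : (fun x => pdx u (x, -1 / T)) =ᶠ[nhds (-1 / X)]
        (fun x => fderiv ℝ u (x, -1 / T) (1, 0)) := by
      filter_upwards [eventually_ne_nhds ha] with x hx
      simpa [pdx] using (slice_x (hud (x, -1 / T) ⟨hx, hb⟩)).deriv
    exact hev.deriv_eq.trans (slice_x (hvxd ((-1 / X, -1 / T) : ℝ × ℝ) ⟨ha, hb⟩)).deriv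
  have hw := hwave (-1 / X) (-1 / T) ha hb
  rw [hlink_t, hlink_x] at hw
  show deriv (fun t => pdt σ (X, t)) T = _ * deriv (fun x => pdx σ (x, T)) X
  rw [h2t, h2x, hw]
  generalize fderiv ℝ (fun q => fderiv ℝ u q (1, 0)) (-1 / X, -1 / T) (1, 0) = Wxx
  generalize fderiv ℝ u (-1 / X, -1 / T) (0, 1) = Vt
  generalize fderiv ℝ u (-1 / X, -1 / T) (1, 0) = Vx
  field_simp
  ring
end

section
/- Let c : ℝ × ℝ → ℝ, and let u, f : ℝ × ℝ → ℝ be twice continuously differentiable functions each satisfying the wave equation ∂²w/∂t²(x,t) = c(x,t)² · ∂²w/∂x²(x,t) for all (x,t), with f(x,t) ≠ 0 for all (x,t). Define U = u/f. Then U satisfies 2·(∂f/∂t)·(∂U/∂t) + f·(∂²U/∂t²) = c(x,t)² · ( 2·(∂f/∂x)·(∂U/∂x) + f·(∂²U/∂x²) ) for all (x,t). -/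
lemma sliceT_diff {g : ℝ × ℝ → ℝ} (hg : Differentiable ℝ g) (x t : ℝ) :
    DifferentiableAt ℝ (fun s => g (x, s)) t :=
  (hg (x, t)).comp t ((differentiableAt_const x).prodMk differentiableAt_id)

lemma sliceX_diff {g : ℝ × ℝ → ℝ} (hg : Differentiable ℝ g) (x t : ℝ) :
    DifferentiableAt ℝ (fun s => g (s, t)) x :=
  (hg (x, t)).comp x (differentiableAt_id.prodMk (differentiableAt_const t))

lemma pdt_eq (f : ℝ × ℝ → ℝ) (hf : Differentiable ℝ f) (p : ℝ × ℝ) :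
    pdt f p = fderiv ℝ f p ((0 : ℝ), (1 : ℝ)) := by
  have h1 : HasFDerivAt (fun t : ℝ => (p.1, t))
      (((0 : ℝ →L[ℝ] ℝ)).prod (ContinuousLinearMap.id ℝ ℝ)) p.2 :=
    (hasFDerivAt_const p.1 p.2).prodMk (hasFDerivAt_id p.2)
  have h2 := ((hf p).hasFDerivAt.comp p.2 (by simpa using h1))
  have := h2.hasDerivAt.deriv
  simpa [pdt, Function.comp_def] using this

lemma pdx_eq (f : ℝ × ℝ → ℝ) (hf : Differentiable ℝ f) (p : ℝ × ℝ) :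
    pdx f p = fderiv ℝ f p ((1 : ℝ), (0 : ℝ)) := by
  have h1 : HasFDerivAt (fun x : ℝ => (x, p.2))
      ((ContinuousLinearMap.id ℝ ℝ).prod ((0 : ℝ →L[ℝ] ℝ))) p.1 :=
    (hasFDerivAt_id p.1).prodMk (hasFDerivAt_const p.2 p.1)
  have h2 := ((hf p).hasFDerivAt.comp p.1 (by simpa using h1))
  have := h2.hasDerivAt.deriv
  simpa [pdx, Function.comp_def] using this

lemma pdt_contDiff {f : ℝ × ℝ → ℝ} (hf : ContDiff ℝ 2 f) : ContDiff ℝ 1 (pdt f) := by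
  have hd : Differentiable ℝ f := hf.differentiable two_ne_zero
  have : pdt f = fun p => fderiv ℝ f p ((0 : ℝ), (1 : ℝ)) := funext (pdt_eq f hd)
  rw [this]
  exact (hf.fderiv_right (by norm_num)).clm_apply contDiff_const

lemma pdx_contDiff {f : ℝ × ℝ → ℝ} (hf : ContDiff ℝ 2 f) : ContDiff ℝ 1 (pdx f) := by
  have hd : Differentiable ℝ f := hf.differentiable two_ne_zero
  have : pdx f = fun p => fderiv ℝ f p ((1 : ℝ), (0 : ℝ)) := funext (pdx_eq f hd)
  rw [this]
  exact (hf.fderiv_right (by norm_num)).clm_apply contDiff_const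

lemma pdt_mul {g h : ℝ × ℝ → ℝ} (hg : Differentiable ℝ g) (hh : Differentiable ℝ h)
    (p : ℝ × ℝ) : pdt (fun q => g q * h q) p = pdt g p * h p + g p * pdt h p := by
  have := deriv_fun_mul (sliceT_diff hg p.1 p.2) (sliceT_diff hh p.1 p.2)
  simpa [pdt] using this

lemma pdx_mul {g h : ℝ × ℝ → ℝ} (hg : Differentiable ℝ g) (hh : Differentiable ℝ h)
    (p : ℝ × ℝ) : pdx (fun q => g q * h q) p = pdx g p * h p + g p * pdx h p := by
  have := deriv_fun_mul (sliceX_diff hg p.1 p.2) (sliceX_diff hh p.1 p.2)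
  simpa [pdx] using this

lemma pdt2_prod {f U : ℝ × ℝ → ℝ} (hf : ContDiff ℝ 2 f) (hU : ContDiff ℝ 2 U) (p : ℝ × ℝ) :
    pdt (pdt (fun q => f q * U q)) p
      = pdt (pdt f) p * U p + 2 * pdt f p * pdt U p + f p * pdt (pdt U) p := by
  have hfd : Differentiable ℝ f := hf.differentiable two_ne_zero
  have hUd : Differentiable ℝ U := hU.differentiable two_ne_zero
  have hftd : Differentiable ℝ (pdt f) := (pdt_contDiff hf).differentiable one_ne_zero
  have hUtd : Differentiable ℝ (pdt U) := (pdt_contDiff hU).differentiable one_ne_zero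
  have h1 : pdt (fun q => f q * U q) = fun q => pdt f q * U q + f q * pdt U q :=
    funext fun q => pdt_mul hfd hUd q
  rw [h1]
  have d1 : DifferentiableAt ℝ (fun s => pdt f (p.1, s) * U (p.1, s)) p.2 :=
    (sliceT_diff hftd p.1 p.2).mul (sliceT_diff hUd p.1 p.2)
  have d2 : DifferentiableAt ℝ (fun s => f (p.1, s) * pdt U (p.1, s)) p.2 :=
    (sliceT_diff hfd p.1 p.2).mul (sliceT_diff hUtd p.1 p.2)
  have key : pdt (fun q => pdt f q * U q + f q * pdt U q) p
      = (pdt (fun q => pdt f q * U q) p) + (pdt (fun q => f q * pdt U q) p) := by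
    simp only [pdt]
    exact deriv_add d1 d2
  rw [key, pdt_mul hftd hUd, pdt_mul hfd hUtd]
  ring

lemma pdx2_prod {f U : ℝ × ℝ → ℝ} (hf : ContDiff ℝ 2 f) (hU : ContDiff ℝ 2 U) (p : ℝ × ℝ) :
    pdx (pdx (fun q => f q * U q)) p
      = pdx (pdx f) p * U p + 2 * pdx f p * pdx U p + f p * pdx (pdx U) p := by
  have hfd : Differentiable ℝ f := hf.differentiable two_ne_zero
  have hUd : Differentiable ℝ U := hU.differentiable two_ne_zero
  have hftd : Differentiable ℝ (pdx f) := (pdx_contDiff hf).differentiable one_ne_zero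
  have hUtd : Differentiable ℝ (pdx U) := (pdx_contDiff hU).differentiable one_ne_zero
  have h1 : pdx (fun q => f q * U q) = fun q => pdx f q * U q + f q * pdx U q :=
    funext fun q => pdx_mul hfd hUd q
  rw [h1]
  have d1 : DifferentiableAt ℝ (fun s => pdx f (s, p.2) * U (s, p.2)) p.1 :=
    (sliceX_diff hftd p.1 p.2).mul (sliceX_diff hUd p.1 p.2)
  have d2 : DifferentiableAt ℝ (fun s => f (s, p.2) * pdx U (s, p.2)) p.1 :=
    (sliceX_diff hfd p.1 p.2).mul (sliceX_diff hUtd p.1 p.2)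
  have key : pdx (fun q => pdx f q * U q + f q * pdx U q) p
      = (pdx (fun q => pdx f q * U q) p) + (pdx (fun q => f q * pdx U q) p) := by
    simp only [pdx]
    exact deriv_add d1 d2
  rw [key, pdx_mul hftd hUd, pdx_mul hfd hUtd]
  ring

theorem stmt_3 (c : ℝ × ℝ → ℝ) (u f U : ℝ × ℝ → ℝ)
    (hu : ContDiff ℝ 2 u) (hf : ContDiff ℝ 2 f)
    (hwaveu : ∀ x t : ℝ, pdt (pdt u) (x, t) = (c (x, t)) ^ 2 * pdx (pdx u) (x, t))
    (hwavef : ∀ x t : ℝ, pdt (pdt f) (x, t) = (c (x, t)) ^ 2 * pdx (pdx f) (x, t))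
    (hfne : ∀ p : ℝ × ℝ, f p ≠ 0)
    (hU : ∀ p : ℝ × ℝ, U p = u p / f p) :
    ∀ x t : ℝ,
      2 * pdt f (x, t) * pdt U (x, t) + f (x, t) * pdt (pdt U) (x, t)
        = (c (x, t)) ^ 2 *
          (2 * pdx f (x, t) * pdx U (x, t) + f (x, t) * pdx (pdx U) (x, t)) := by
  have hUc : ContDiff ℝ 2 U := by
    have : U = fun p => u p / f p := funext hU
    rw [this]
    exact hu.div hf hfne
  have hufU : u = fun q => f q * U q := by
    funext q
    rw [hU q, mul_div_cancel₀ _ (hfne q)]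
  intro x t
  have kt := pdt2_prod hf hUc (x, t)
  have kx := pdx2_prod hf hUc (x, t)
  rw [← hufU] at kt kx
  have h1 := hwaveu x t
  have h2 := hwavef x t
  rw [kt, kx] at h1
  linear_combination h1 - U (x, t) * h2
end

section
/- Let c : ℝ → ℝ and let u : ℝ × ℝ → ℝ be three times continuously differentiable on {(x,t) : t ≠ 0} and satisfy the wave equation ∂²u/∂t²(x,t) = c(x)² · ∂²u/∂x²(x,t) for all x and all t ≠ 0. Define β(x,t) = ( t · ∂u/∂t(x,t) − u(x,t) ) / t², i.e. β = ∂/∂t (u/t). Then β satisfies the scalar linear PDE ∂/∂t ( t⁻² · ∂/∂t ( t² β(x,t) ) ) = c(x)² · ∂²β/∂x²(x,t) for all x and all t ≠ 0. -/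
open Filter Topology

lemma sliceX {f : ℝ × ℝ → ℝ} {p : ℝ × ℝ} (hf : DifferentiableAt ℝ f p) :
    HasDerivAt (fun y => f (y, p.2)) (pdx f p) p.1 := by
  have h : DifferentiableAt ℝ (fun y => f (y, p.2)) p.1 :=
    hf.comp p.1 (differentiableAt_id.prodMk (differentiableAt_const p.2))
  exact h.hasDerivAt

lemma sliceT {f : ℝ × ℝ → ℝ} {p : ℝ × ℝ} (hf : DifferentiableAt ℝ f p) :
    HasDerivAt (fun r => f (p.1, r)) (pdt f p) p.2 := by
  have h : DifferentiableAt ℝ (fun r => f (p.1, r)) p.2 :=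
    hf.comp p.2 ((differentiableAt_const p.1).prodMk differentiableAt_id)
  exact h.hasDerivAt

lemma sliceX_fderiv {f : ℝ × ℝ → ℝ} {p : ℝ × ℝ} (hf : DifferentiableAt ℝ f p) :
    HasDerivAt (fun y => f (y, p.2)) (fderiv ℝ f p (1, 0)) p.1 :=
  hf.hasFDerivAt.comp_hasDerivAt p.1 ((hasDerivAt_id p.1).prodMk (hasDerivAt_const p.1 p.2))

lemma sliceT_fderiv {f : ℝ × ℝ → ℝ} {p : ℝ × ℝ} (hf : DifferentiableAt ℝ f p) :
    HasDerivAt (fun r => f (p.1, r)) (fderiv ℝ f p (0, 1)) p.2 :=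
  hf.hasFDerivAt.comp_hasDerivAt p.2 ((hasDerivAt_const p.2 p.1).prodMk (hasDerivAt_id p.2))

lemma pdx_eq_fderiv {f : ℝ × ℝ → ℝ} {p : ℝ × ℝ} (hf : DifferentiableAt ℝ f p) :
    pdx f p = fderiv ℝ f p (1, 0) := (sliceX_fderiv hf).deriv

lemma pdt_eq_fderiv {f : ℝ × ℝ → ℝ} {p : ℝ × ℝ} (hf : DifferentiableAt ℝ f p) :
    pdt f p = fderiv ℝ f p (0, 1) := (sliceT_fderiv hf).deriv

lemma pdx_congr {f g : ℝ × ℝ → ℝ} {p : ℝ × ℝ} (h : f =ᶠ[𝓝 p] g) : pdx f p = pdx g p := by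
  have hl : Filter.Tendsto (fun y : ℝ => (y, p.2)) (𝓝 p.1) (𝓝 p) :=
    (continuous_id.prodMk continuous_const).tendsto p.1
  exact Filter.EventuallyEq.deriv_eq (h.comp_tendsto hl)

lemma pdt_congr {f g : ℝ × ℝ → ℝ} {p : ℝ × ℝ} (h : f =ᶠ[𝓝 p] g) : pdt f p = pdt g p := by
  have hl : Filter.Tendsto (fun r : ℝ => (p.1, r)) (𝓝 p.2) (𝓝 p) :=
    (continuous_const.prodMk continuous_id).tendsto p.2
  exact Filter.EventuallyEq.deriv_eq (h.comp_tendsto hl)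

lemma contDiffOn_pdx {m n : WithTop ℕ∞} {f : ℝ × ℝ → ℝ} {S : Set (ℝ × ℝ)} (hS : IsOpen S)
    (hf : ContDiffOn ℝ n f S) (hmn : m + 1 ≤ n) : ContDiffOn ℝ m (pdx f) S := by
  have hfd : ContDiffOn ℝ m (fderiv ℝ f) S := hf.fderiv_of_isOpen hS hmn
  have h2 : ContDiffOn ℝ m (fun p => fderiv ℝ f p (1, 0)) S := hfd.clm_apply contDiffOn_const
  refine h2.congr fun p hp => ?_
  have hd : DifferentiableAt ℝ f p :=
    (hf.contDiffAt (hS.mem_nhds hp)).differentiableAt (fun h => by simp [h] at hmn)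
  exact pdx_eq_fderiv hd

lemma contDiffOn_pdt {m n : WithTop ℕ∞} {f : ℝ × ℝ → ℝ} {S : Set (ℝ × ℝ)} (hS : IsOpen S)
    (hf : ContDiffOn ℝ n f S) (hmn : m + 1 ≤ n) : ContDiffOn ℝ m (pdt f) S := by
  have hfd : ContDiffOn ℝ m (fderiv ℝ f) S := hf.fderiv_of_isOpen hS hmn
  have h2 : ContDiffOn ℝ m (fun p => fderiv ℝ f p (0, 1)) S := hfd.clm_apply contDiffOn_const
  refine h2.congr fun p hp => ?_
  have hd : DifferentiableAt ℝ f p :=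
    (hf.contDiffAt (hS.mem_nhds hp)).differentiableAt (fun h => by simp [h] at hmn)
  exact pdt_eq_fderiv hd

lemma pdx_pdt_comm {f : ℝ × ℝ → ℝ} {p : ℝ × ℝ} (hf : ContDiffAt ℝ 2 f p) :
    pdx (pdt f) p = pdt (pdx f) p := by
  have hev : ∀ᶠ q in 𝓝 p, ContDiffAt ℝ 2 f q := hf.eventually (by simp)
  have hdiff : ∀ᶠ q in 𝓝 p, HasFDerivAt f (fderiv ℝ f q) q :=
    hev.mono fun q hq => (hq.differentiableAt two_ne_zero).hasFDerivAt
  have hf1 : ContDiffAt ℝ 1 (fderiv ℝ f) p := hf.fderiv_right (le_refl _)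
  have hf'' : HasFDerivAt (fderiv ℝ f) (fderiv ℝ (fderiv ℝ f) p) p :=
    (hf1.differentiableAt one_ne_zero).hasFDerivAt
  have hsymm := second_derivative_symmetric_of_eventually hdiff hf'' (1, 0) (0, 1)
  have h1 : pdt f =ᶠ[𝓝 p] fun q => fderiv ℝ f q (0, 1) := by
    filter_upwards [hev] with q hq
    exact pdt_eq_fderiv (hq.differentiableAt two_ne_zero)
  have h2 : pdx f =ᶠ[𝓝 p] fun q => fderiv ℝ f q (1, 0) := by
    filter_upwards [hev] with q hq
    exact pdx_eq_fderiv (hq.differentiableAt two_ne_zero)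
  have e1 : pdx (pdt f) p = fderiv ℝ (fderiv ℝ f) p (1, 0) (0, 1) := by
    rw [pdx_congr h1]
    have hD : HasDerivAt (fun y => fderiv ℝ f (y, p.2)) (fderiv ℝ (fderiv ℝ f) p (1, 0)) p.1 :=
      hf''.comp_hasDerivAt p.1 ((hasDerivAt_id p.1).prodMk (hasDerivAt_const p.1 p.2))
    have hD2 : HasDerivAt (fun y => fderiv ℝ f (y, p.2) (0, 1))
        (fderiv ℝ (fderiv ℝ f) p (1, 0) (0, 1)) p.1 := by
      have := hD.clm_apply (hasDerivAt_const p.1 ((0 : ℝ), (1 : ℝ)))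
      simpa using this
    exact hD2.deriv
  have e2 : pdt (pdx f) p = fderiv ℝ (fderiv ℝ f) p (0, 1) (1, 0) := by
    rw [pdt_congr h2]
    have hD : HasDerivAt (fun r => fderiv ℝ f (p.1, r)) (fderiv ℝ (fderiv ℝ f) p (0, 1)) p.2 :=
      hf''.comp_hasDerivAt p.2 ((hasDerivAt_const p.2 p.1).prodMk (hasDerivAt_id p.2))
    have hD2 : HasDerivAt (fun r => fderiv ℝ f (p.1, r) (1, 0))
        (fderiv ℝ (fderiv ℝ f) p (0, 1) (1, 0)) p.2 := by
      have := hD.clm_apply (hasDerivAt_const p.2 ((1 : ℝ), (0 : ℝ)))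
      simpa using this
    exact hD2.deriv
  rw [e1, e2, hsymm]

theorem stmt_5 (c : ℝ → ℝ) (u β : ℝ × ℝ → ℝ)
    (hu : ContDiffOn ℝ 3 u {p : ℝ × ℝ | p.2 ≠ 0})
    (hwave : ∀ x t : ℝ, t ≠ 0 →
      pdt (pdt u) (x, t) = (c x) ^ 2 * pdx (pdx u) (x, t))
    (hβ : ∀ x t : ℝ, t ≠ 0 →
      β (x, t) = (t * pdt u (x, t) - u (x, t)) / t ^ 2) :
    ∀ x t : ℝ, t ≠ 0 →
      pdt (fun p => (p.2 ^ 2)⁻¹ * pdt (fun q => q.2 ^ 2 * β q) p) (x, t)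
        = (c x) ^ 2 * pdx (pdx β) (x, t) := by
  intro x t ht
  set S : Set (ℝ × ℝ) := {p : ℝ × ℝ | p.2 ≠ 0} with hSdef
  have hS : IsOpen S := isOpen_ne.preimage continuous_snd
  have hmem : ∀ {y s : ℝ}, s ≠ 0 → (y, s) ∈ S := fun h => h
  have hxt : (x, t) ∈ S := hmem ht
  -- smoothness of partial derivatives
  have h1t : ContDiffOn ℝ 2 (pdt u) S := contDiffOn_pdt hS hu (by norm_num)
  have h1x : ContDiffOn ℝ 2 (pdx u) S := contDiffOn_pdx hS hu (by norm_num)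
  have h2xx : ContDiffOn ℝ 1 (pdx (pdx u)) S := contDiffOn_pdx hS h1x (by norm_num)
  have h2xt : ContDiffOn ℝ 1 (pdx (pdt u)) S := contDiffOn_pdx hS h1t (by norm_num)
  -- pointwise differentiability
  have du : ∀ q ∈ S, DifferentiableAt ℝ u q := fun q hq =>
    (hu.contDiffAt (hS.mem_nhds hq)).differentiableAt (by norm_num)
  have dpdtu : ∀ q ∈ S, DifferentiableAt ℝ (pdt u) q := fun q hq =>
    (h1t.contDiffAt (hS.mem_nhds hq)).differentiableAt (by norm_num)
  have dpdxu : ∀ q ∈ S, DifferentiableAt ℝ (pdx u) q := fun q hq =>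
    (h1x.contDiffAt (hS.mem_nhds hq)).differentiableAt (by norm_num)
  have dpxxu : ∀ q ∈ S, DifferentiableAt ℝ (pdx (pdx u)) q := fun q hq =>
    (h2xx.contDiffAt (hS.mem_nhds hq)).differentiableAt (by norm_num)
  have dpxtu : ∀ q ∈ S, DifferentiableAt ℝ (pdx (pdt u)) q := fun q hq =>
    (h2xt.contDiffAt (hS.mem_nhds hq)).differentiableAt (by norm_num)
  -- Step A : inner t-derivative
  have keyA : ∀ s : ℝ, s ≠ 0 →
      pdt (fun q => q.2 ^ 2 * β q) (x, s) = s * pdt (pdt u) (x, s) := by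
    intro s hs
    have hev : (fun r => r ^ 2 * β (x, r)) =ᶠ[𝓝 s]
        (fun r => r * pdt u (x, r) - u (x, r)) := by
      filter_upwards [eventually_ne_nhds hs] with r hr
      rw [hβ x r hr]
      field_simp
    have hd : HasDerivAt (fun r => r * pdt u (x, r) - u (x, r))
        (1 * pdt u (x, s) + s * pdt (pdt u) (x, s) - pdt u (x, s)) s :=
      ((hasDerivAt_id s).mul (sliceT (dpdtu (x, s) (hmem hs)))).sub
        (sliceT (du (x, s) (hmem hs)))
    show deriv (fun r => ((x, r) : ℝ × ℝ).2 ^ 2 * β (x, r)) s = _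
    rw [show (fun r => ((x, r) : ℝ × ℝ).2 ^ 2 * β (x, r)) = fun r => r ^ 2 * β (x, r) from rfl,
      hev.deriv_eq, hd.deriv]
    ring
  -- Step B : LHS
  have hevt : (fun s => (s ^ 2)⁻¹ * pdt (fun q => q.2 ^ 2 * β q) (x, s)) =ᶠ[𝓝 t]
      (fun s => c x ^ 2 * (s⁻¹ * pdx (pdx u) (x, s))) := by
    filter_upwards [eventually_ne_nhds ht] with s hs
    rw [keyA s hs, hwave x s hs]
    field_simp
  have hdR : HasDerivAt (fun s => c x ^ 2 * (s⁻¹ * pdx (pdx u) (x, s)))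
      (c x ^ 2 * (-(t ^ 2)⁻¹ * pdx (pdx u) (x, t) + t⁻¹ * pdt (pdx (pdx u)) (x, t))) t :=
    (((hasDerivAt_inv ht).mul (sliceT (dpxxu (x, t) hxt))).const_mul _)
  have hLHS : pdt (fun p => (p.2 ^ 2)⁻¹ * pdt (fun q => q.2 ^ 2 * β q) p) (x, t)
      = c x ^ 2 * (-(t ^ 2)⁻¹ * pdx (pdx u) (x, t) + t⁻¹ * pdt (pdx (pdx u)) (x, t)) := by
    show deriv (fun s => (((x, s) : ℝ × ℝ).2 ^ 2)⁻¹ *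
        pdt (fun q => q.2 ^ 2 * β q) (x, s)) t = _
    rw [show (fun s => (((x, s) : ℝ × ℝ).2 ^ 2)⁻¹ * pdt (fun q => q.2 ^ 2 * β q) (x, s))
        = fun s => (s ^ 2)⁻¹ * pdt (fun q => q.2 ^ 2 * β q) (x, s) from rfl,
      hevt.deriv_eq, hdR.deriv]
  -- Step C : RHS
  have hβx : ∀ q ∈ S, pdx β q = (q.2 * pdx (pdt u) q - pdx u q) / q.2 ^ 2 := by
    intro q hq
    have hfe : (fun y => β (y, q.2)) =
        fun y => (q.2 * pdt u (y, q.2) - u (y, q.2)) / q.2 ^ 2 :=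
      funext fun y => hβ y q.2 hq
    have hd : HasDerivAt (fun y => (q.2 * pdt u (y, q.2) - u (y, q.2)) / q.2 ^ 2)
        ((q.2 * pdx (pdt u) q - pdx u q) / q.2 ^ 2) q.1 :=
      (((sliceX (dpdtu q hq)).const_mul q.2).sub (sliceX (du q hq))).div_const _
    show deriv (fun y => β (y, q.2)) q.1 = _
    rw [hfe]
    exact hd.deriv
  have hRHS : pdx (pdx β) (x, t)
      = (t * pdx (pdx (pdt u)) (x, t) - pdx (pdx u) (x, t)) / t ^ 2 := by
    have hfe : (fun y => pdx β (y, t)) =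
        fun y => (t * pdx (pdt u) (y, t) - pdx u (y, t)) / t ^ 2 :=
      funext fun y => hβx (y, t) (hmem ht)
    have hd : HasDerivAt (fun y => (t * pdx (pdt u) (y, t) - pdx u (y, t)) / t ^ 2)
        ((t * pdx (pdx (pdt u)) (x, t) - pdx (pdx u) (x, t)) / t ^ 2) x :=
      (((sliceX (dpxtu (x, t) hxt)).const_mul t).sub (sliceX (dpdxu (x, t) hxt))).div_const _
    show deriv (fun y => pdx β (y, t)) x = _
    rw [hfe]
    exact hd.deriv
  -- Step D : commuting mixed partials
  have hc1 : ∀ q ∈ S, pdx (pdt u) q = pdt (pdx u) q := fun q hq =>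
    pdx_pdt_comm ((hu.contDiffAt (hS.mem_nhds hq)).of_le (by norm_num))
  have hc2 : pdx (pdx (pdt u)) (x, t) = pdx (pdt (pdx u)) (x, t) :=
    pdx_congr (Filter.eventuallyEq_of_mem (hS.mem_nhds hxt) hc1)
  have hc3 : pdx (pdt (pdx u)) (x, t) = pdt (pdx (pdx u)) (x, t) :=
    pdx_pdt_comm (h1x.contDiffAt (hS.mem_nhds hxt))
  rw [hLHS, hRHS, hc2, hc3]
  field_simp
  ring
end

section
/- Let c : ℝ → ℝ and let B : ℝ × ℝ → ℝ be twice continuously differentiable on {(x,t) : t > 0} and satisfy (4/t) · ∂B/∂t(x,t) + ∂²B/∂t²(x,t) = c(x)² · ∂²B/∂x²(x,t) for all x and all t > 0. Define B̃ : ℝ × (0,∞) → ℝ by B̃(x,T) = B(x, 3 T^{−1/3}). Then B̃ satisfies ∂²B̃/∂T²(x,T) = T^{−8/3} · c(x)² · ∂²B̃/∂x²(x,T) for all x and all T > 0. -/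
theorem stmt_7 (c : ℝ → ℝ) (B Btil : ℝ × ℝ → ℝ)
    (hB : ContDiffOn ℝ 2 B {p : ℝ × ℝ | 0 < p.2})
    (hpde : ∀ x t : ℝ, 0 < t →
      (4 / t) * pdt B (x, t) + pdt (pdt B) (x, t)
        = (c x) ^ 2 * pdx (pdx B) (x, t))
    (hBtil : ∀ x T : ℝ, 0 < T → Btil (x, T) = B (x, 3 * T ^ (-(1 : ℝ) / 3))) :
    ∀ x T : ℝ, 0 < T →
      pdt (pdt Btil) (x, T)
        = T ^ (-(8 : ℝ) / 3) * (c x) ^ 2 * pdx (pdx Btil) (x, T) := by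
  intro x T hT
  set g : ℝ → ℝ := fun s => 3 * s ^ (-(1 : ℝ) / 3) with hgdef
  have hgpos : ∀ s : ℝ, 0 < s → 0 < g s := by
    intro s hs
    have : (0:ℝ) < s ^ (-(1:ℝ)/3) := Real.rpow_pos_of_pos hs _
    simp only [hgdef]; linarith
  set f : ℝ → ℝ := fun s => B (x, s) with hfdef
  have hfC2 : ContDiffOn ℝ 2 f (Set.Ioi 0) := by
    have hι : ContDiff ℝ 2 (fun s : ℝ => ((x, s) : ℝ × ℝ)) := contDiff_const.prodMk contDiff_id
    exact hB.comp hι.contDiffOn (fun s hs => hs)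
  have hf'C1 : ContDiffOn ℝ 1 (deriv f) (Set.Ioi 0) :=
    hfC2.deriv_of_isOpen isOpen_Ioi (by norm_num)
  have hdf : ∀ s : ℝ, 0 < s → HasDerivAt f (deriv f s) s := fun s hs =>
    ((hfC2.differentiableOn (by norm_num)).differentiableAt
      (isOpen_Ioi.mem_nhds hs)).hasDerivAt
  have hdf' : ∀ s : ℝ, 0 < s → HasDerivAt (deriv f) (deriv (deriv f) s) s := fun s hs =>
    ((hf'C1.differentiableOn (by norm_num)).differentiableAt
      (isOpen_Ioi.mem_nhds hs)).hasDerivAt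
  -- derivative of g
  have hgd : ∀ s : ℝ, 0 < s → HasDerivAt g (-(s ^ (-(4 : ℝ) / 3))) s := by
    intro s hs
    have h := (Real.hasDerivAt_rpow_const (x := s) (p := -(1:ℝ)/3) (Or.inl hs.ne')).const_mul (3:ℝ)
    have hval : (3:ℝ) * (-(1:ℝ)/3 * s ^ (-(1:ℝ)/3 - 1)) = -(s ^ (-(4:ℝ)/3)) := by
      rw [show (-(1:ℝ)/3 - 1) = -(4:ℝ)/3 by norm_num]; ring
    rw [hval] at h
    exact h
  -- first t-derivative of Btil
  have pdtA : ∀ s : ℝ, 0 < s →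
      pdt Btil (x, s) = deriv f (g s) * -(s ^ (-(4 : ℝ) / 3)) := by
    intro s hs
    have hev : (fun u => Btil (x, u)) =ᶠ[nhds s] (fun u => f (g u)) := by
      filter_upwards [isOpen_Ioi.mem_nhds hs] with u hu
      exact hBtil x u hu
    have hcomp : HasDerivAt (fun u => f (g u))
        (deriv f (g s) * -(s ^ (-(4 : ℝ) / 3))) s :=
      (hdf (g s) (hgpos s hs)).comp s (hgd s hs)
    show deriv (fun u => Btil (x, u)) s = _
    rw [hev.deriv_eq, hcomp.deriv]
  -- second t-derivative of Btil
  have h1 : HasDerivAt (fun s => deriv f (g s))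
      (deriv (deriv f) (g T) * -(T ^ (-(4 : ℝ) / 3))) T :=
    (hdf' (g T) (hgpos T hT)).comp T (hgd T hT)
  have h2 : HasDerivAt (fun s : ℝ => -(s ^ (-(4 : ℝ) / 3)))
      ((4 : ℝ) / 3 * T ^ (-(7 : ℝ) / 3)) T := by
    have h := (Real.hasDerivAt_rpow_const (x := T) (p := -(4:ℝ)/3) (Or.inl hT.ne')).neg
    have hval : -(-(4:ℝ)/3 * T ^ (-(4:ℝ)/3 - 1)) = (4:ℝ)/3 * T ^ (-(7:ℝ)/3) := by
      rw [show (-(4:ℝ)/3 - 1) = -(7:ℝ)/3 by norm_num]; ring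
    rw [hval] at h
    exact h
  have hev2 : (fun s => pdt Btil (x, s)) =ᶠ[nhds T]
      (fun s => deriv f (g s) * -(s ^ (-(4 : ℝ) / 3))) := by
    filter_upwards [isOpen_Ioi.mem_nhds (Set.mem_Ioi.mpr hT)] with u hu
    exact pdtA u hu
  have key : HasDerivAt (fun s => pdt Btil (x, s))
      (deriv (deriv f) (g T) * -(T ^ (-(4 : ℝ) / 3)) * -(T ^ (-(4 : ℝ) / 3))
        + deriv f (g T) * ((4 : ℝ) / 3 * T ^ (-(7 : ℝ) / 3))) T :=
    (h1.mul h2).congr_of_eventuallyEq hev2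
  have hLHS : pdt (pdt Btil) (x, T)
      = deriv (deriv f) (g T) * -(T ^ (-(4 : ℝ) / 3)) * -(T ^ (-(4 : ℝ) / 3))
        + deriv f (g T) * ((4 : ℝ) / 3 * T ^ (-(7 : ℝ) / 3)) := by
    show deriv (fun s => pdt Btil (x, s)) T = _
    exact key.deriv
  -- x-derivatives
  have hRHS : pdx (pdx Btil) (x, T) = pdx (pdx B) (x, g T) := by
    have hxs : (fun z => Btil (z, T)) = fun z => B (z, g T) :=
      funext fun z => hBtil z T hT
    have hpx : ∀ y : ℝ, pdx Btil (y, T) = pdx B (y, g T) := by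
      intro y
      show deriv (fun z => Btil (z, T)) y = deriv (fun z => B (z, g T)) y
      rw [hxs]
    show deriv (fun y => pdx Btil (y, T)) x = deriv (fun y => pdx B (y, g T)) x
    congr 1
    exact funext hpx
  -- the PDE at t = g T
  have hp := hpde x (g T) (hgpos T hT)
  have e1 : pdt B (x, g T) = deriv f (g T) := rfl
  have e2 : pdt (pdt B) (x, g T) = deriv (deriv f) (g T) := rfl
  rw [e1, e2] at hp
  rw [hLHS, hRHS]
  -- algebra with rpow
  have hne : T ^ (-(1 : ℝ) / 3) ≠ 0 := (Real.rpow_pos_of_pos hT _).ne'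
  have r2 : T ^ (-(1 : ℝ) / 3) * T ^ (-(7 : ℝ) / 3) = T ^ (-(8 : ℝ) / 3) := by
    rw [← Real.rpow_add hT]; norm_num
  have r1 : T ^ (-(4 : ℝ) / 3) * T ^ (-(4 : ℝ) / 3) = T ^ (-(8 : ℝ) / 3) := by
    rw [← Real.rpow_add hT]; norm_num
  have h3 : 4 / (3 * T ^ (-(1 : ℝ) / 3)) * T ^ (-(8 : ℝ) / 3)
      = 4 / 3 * T ^ (-(7 : ℝ) / 3) := by
    rw [← r2]; field_simp
  have hgT : g T = 3 * T ^ (-(1 : ℝ) / 3) := rfl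
  rw [hgT] at hp
  linear_combination T ^ (-(8 : ℝ) / 3) * hp - deriv f (g T) * h3
    + deriv (deriv f) (g T) * r1
end

section
/- Let c : ℝ → ℝ and let u : ℝ × ℝ → ℝ be three times continuously differentiable on {(x,t) : t > 0} and satisfy the wave equation ∂²u/∂t²(x,t) = c(x)² · ∂²u/∂x²(x,t) for all x and all t > 0. Define B : ℝ × (0,∞) → ℝ by B(x,T) = ( t · ∂u/∂t(x,t) − u(x,t) ) / t³ evaluated at t = 3 T^{−1/3}. Then B satisfies ∂²B/∂T²(x,T) = T^{−8/3} · c(x)² · ∂²B/∂x²(x,T) for all x and all T > 0. -/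
open Real Filter Topology

def S9 : Set (ℝ × ℝ) := {p : ℝ × ℝ | 0 < p.2}
lemma isOpen_S9 : IsOpen S9 := isOpen_lt continuous_const continuous_snd
lemma mem_S9 {a t : ℝ} (ht : 0 < t) : ((a, t) : ℝ × ℝ) ∈ S9 := ht
noncomputable def DX (g : ℝ × ℝ → ℝ) : ℝ × ℝ → ℝ := fun p => fderiv ℝ g p (1, 0)
noncomputable def DT (g : ℝ × ℝ → ℝ) : ℝ × ℝ → ℝ := fun p => fderiv ℝ g p (0, 1)
lemma contDiffOn_DX {g : ℝ × ℝ → ℝ} {n m : WithTop ℕ∞} (hg : ContDiffOn ℝ n g S9)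
    (h : m + 1 ≤ n) : ContDiffOn ℝ m (DX g) S9 :=
  (hg.fderiv_of_isOpen isOpen_S9 h).clm_apply contDiffOn_const
lemma contDiffOn_DT {g : ℝ × ℝ → ℝ} {n m : WithTop ℕ∞} (hg : ContDiffOn ℝ n g S9)
    (h : m + 1 ≤ n) : ContDiffOn ℝ m (DT g) S9 :=
  (hg.fderiv_of_isOpen isOpen_S9 h).clm_apply contDiffOn_const
lemma diffAt {g : ℝ × ℝ → ℝ} {n : WithTop ℕ∞} (hg : ContDiffOn ℝ n g S9) (hn : 1 ≤ n)
    {a t : ℝ} (ht : 0 < t) : DifferentiableAt ℝ g (a, t) :=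
  (hg.differentiableOn (zero_lt_one.trans_le hn).ne').differentiableAt (isOpen_S9.mem_nhds (mem_S9 ht))
lemma hasDerivAt_T {g : ℝ × ℝ → ℝ} {a b : ℝ} (h : DifferentiableAt ℝ g (a, b)) :
    HasDerivAt (fun t => g (a, t)) (DT g (a, b)) b := by
  have hline : HasDerivAt (fun t : ℝ => ((a, t) : ℝ × ℝ)) ((0 : ℝ), (1 : ℝ)) b :=
    (hasDerivAt_const _ _).prodMk (hasDerivAt_id _)
  exact h.hasFDerivAt.comp_hasDerivAt b hline
lemma hasDerivAt_X {g : ℝ × ℝ → ℝ} {a b : ℝ} (h : DifferentiableAt ℝ g (a, b)) :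
    HasDerivAt (fun x => g (x, b)) (DX g (a, b)) a := by
  have hline : HasDerivAt (fun x : ℝ => ((x, b) : ℝ × ℝ)) ((1 : ℝ), (0 : ℝ)) a :=
    (hasDerivAt_id _).prodMk (hasDerivAt_const _ _)
  exact h.hasFDerivAt.comp_hasDerivAt a hline
lemma pdt_eq' {g : ℝ × ℝ → ℝ} {a b : ℝ} (h : DifferentiableAt ℝ g (a, b)) :
    pdt g (a, b) = DT g (a, b) := (hasDerivAt_T h).deriv
lemma pdx_eq' {g : ℝ × ℝ → ℝ} {a b : ℝ} (h : DifferentiableAt ℝ g (a, b)) :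
    pdx g (a, b) = DX g (a, b) := (hasDerivAt_X h).deriv
lemma fderiv_apply_eval {g : ℝ × ℝ → ℝ} {p : ℝ × ℝ} (hd : DifferentiableAt ℝ (fderiv ℝ g) p)
    (v w : ℝ × ℝ) :
    fderiv ℝ (fun q => fderiv ℝ g q w) p v = fderiv ℝ (fderiv ℝ g) p v w := by
  have h1 := (hd.hasFDerivAt.clm_apply (hasFDerivAt_const w p)).fderiv
  rw [h1]; simp
lemma swapXT {g : ℝ × ℝ → ℝ} {p : ℝ × ℝ} (h : ContDiffAt ℝ 2 g p) :
    DX (DT g) p = DT (DX g) p := by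
  have hd : DifferentiableAt ℝ (fderiv ℝ g) p :=
    (h.fderiv_right (m := 1) (by norm_num)).differentiableAt one_ne_zero
  have hsymm : IsSymmSndFDerivAt ℝ g p := h.isSymmSndFDerivAt (by simp)
  calc DX (DT g) p = fderiv ℝ (fderiv ℝ g) p (1,0) (0,1) := fderiv_apply_eval hd _ _
    _ = fderiv ℝ (fderiv ℝ g) p (0,1) (1,0) := hsymm _ _
    _ = DT (DX g) p := (fderiv_apply_eval hd _ _).symm
lemma DX_congr_S9 {g₁ g₂ : ℝ × ℝ → ℝ} (h : ∀ q ∈ S9, g₁ q = g₂ q) {a t : ℝ} (ht : 0 < t) :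
    DX g₁ (a, t) = DX g₂ (a, t) := by
  unfold DX
  congr 1
  apply Filter.EventuallyEq.fderiv_eq
  filter_upwards [isOpen_S9.mem_nhds (mem_S9 ht)] with q hq using h q hq

section calc9
variable {u : ℝ × ℝ → ℝ}

lemma hvt (hu : ContDiffOn ℝ 3 u S9) (a t : ℝ) (ht : 0 < t) :
    HasDerivAt (fun τ => (τ * DT u (a, τ) - u (a, τ)) / τ ^ 3)
      ((t ^ 2 * DT (DT u) (a, t) - 3 * t * DT u (a, t) + 3 * u (a, t)) / t ^ 4) t := by
  have hU : HasDerivAt (fun τ => u (a, τ)) (DT u (a, t)) t :=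
    hasDerivAt_T (diffAt hu (by norm_num) ht)
  have hA : HasDerivAt (fun τ => DT u (a, τ)) (DT (DT u) (a, t)) t :=
    hasDerivAt_T (diffAt (contDiffOn_DT (m := 2) hu (by norm_num)) (by norm_num) ht)
  have hN : HasDerivAt (fun τ => τ * DT u (a, τ) - u (a, τ))
      (1 * DT u (a, t) + t * DT (DT u) (a, t) - DT u (a, t)) t :=
    ((hasDerivAt_id t).mul hA).sub hU
  have hD : HasDerivAt (fun τ : ℝ => τ ^ 3) ((3 : ℕ) * t ^ (3 - 1)) t := hasDerivAt_pow 3 t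
  have := hN.div hD (pow_ne_zero 3 ht.ne')
  refine this.congr_deriv ?_
  have h3 : t ≠ 0 := ht.ne'
  field_simp
  ring

lemma hvtt (hu : ContDiffOn ℝ 3 u S9) (a t : ℝ) (ht : 0 < t) :
    HasDerivAt (fun τ => (τ ^ 2 * DT (DT u) (a, τ) - 3 * τ * DT u (a, τ) + 3 * u (a, τ)) / τ ^ 4)
      ((t ^ 3 * DT (DT (DT u)) (a, t) - 5 * t ^ 2 * DT (DT u) (a, t)
        + 12 * t * DT u (a, t) - 12 * u (a, t)) / t ^ 5) t := by
  have hU : HasDerivAt (fun τ => u (a, τ)) (DT u (a, t)) t :=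
    hasDerivAt_T (diffAt hu (by norm_num) ht)
  have hA : HasDerivAt (fun τ => DT u (a, τ)) (DT (DT u) (a, t)) t :=
    hasDerivAt_T (diffAt (contDiffOn_DT (m := 2) hu (by norm_num)) (by norm_num) ht)
  have hA2 : HasDerivAt (fun τ => DT (DT u) (a, τ)) (DT (DT (DT u)) (a, t)) t :=
    hasDerivAt_T (diffAt (contDiffOn_DT (m := 1) (contDiffOn_DT (m := 2) hu (by norm_num)) (by norm_num))
      (by norm_num) ht)
  have hN : HasDerivAt
      (fun τ => τ ^ 2 * DT (DT u) (a, τ) - 3 * τ * DT u (a, τ) + 3 * u (a, τ))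
      (((2:ℕ) * t ^ (2-1)) * DT (DT u) (a, t) + t ^ 2 * DT (DT (DT u)) (a, t)
        - ((3 * 1) * DT u (a, t) + (3 * t) * DT (DT u) (a, t)) + 3 * DT u (a, t)) t :=
    (((hasDerivAt_pow 2 t).mul hA2).sub (((hasDerivAt_id t).const_mul 3).mul hA)).add
      (hU.const_mul 3)
  have hD : HasDerivAt (fun τ : ℝ => τ ^ 4) ((4 : ℕ) * t ^ (4 - 1)) t := hasDerivAt_pow 4 t
  have := hN.div hD (pow_ne_zero 4 ht.ne')
  refine this.congr_deriv ?_
  have h3 : t ≠ 0 := ht.ne'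
  field_simp
  ring

lemma hvx (hu : ContDiffOn ℝ 3 u S9) (a t : ℝ) (ht : 0 < t) :
    HasDerivAt (fun y => (t * DT u (y, t) - u (y, t)) / t ^ 3)
      ((t * DX (DT u) (a, t) - DX u (a, t)) / t ^ 3) a := by
  have hU : HasDerivAt (fun y => u (y, t)) (DX u (a, t)) a :=
    hasDerivAt_X (diffAt hu (by norm_num) ht)
  have hA : HasDerivAt (fun y => DT u (y, t)) (DX (DT u) (a, t)) a :=
    hasDerivAt_X (diffAt (contDiffOn_DT (m := 2) hu (by norm_num)) (by norm_num) ht)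
  exact ((hA.const_mul t).sub hU).div_const (t ^ 3)

lemma hvxx (hu : ContDiffOn ℝ 3 u S9) (a t : ℝ) (ht : 0 < t) :
    HasDerivAt (fun y => (t * DX (DT u) (y, t) - DX u (y, t)) / t ^ 3)
      ((t * DX (DX (DT u)) (a, t) - DX (DX u) (a, t)) / t ^ 3) a := by
  have hU : HasDerivAt (fun y => DX u (y, t)) (DX (DX u) (a, t)) a :=
    hasDerivAt_X (diffAt (contDiffOn_DX (m := 2) hu (by norm_num)) (by norm_num) ht)
  have hA : HasDerivAt (fun y => DX (DT u) (y, t)) (DX (DX (DT u)) (a, t)) a :=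
    hasDerivAt_X (diffAt (contDiffOn_DX (m := 1) (contDiffOn_DT (m := 2) hu (by norm_num)) (by norm_num))
      (by norm_num) ht)
  exact ((hA.const_mul t).sub hU).div_const (t ^ 3)

variable {c : ℝ → ℝ}

lemma waveDT (hu : ContDiffOn ℝ 3 u S9)
    (hwave : ∀ x t : ℝ, 0 < t → pdt (pdt u) (x, t) = c x ^ 2 * pdx (pdx u) (x, t)) :
    ∀ a t : ℝ, 0 < t → DT (DT u) (a, t) = c a ^ 2 * DX (DX u) (a, t) := by
  intro a t ht
  have h1 : pdt (pdt u) (a, t) = DT (DT u) (a, t) := by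
    have he : (fun τ => pdt u (a, τ)) =ᶠ[𝓝 t] fun τ => DT u (a, τ) := by
      filter_upwards [Ioi_mem_nhds ht] with τ hτ
      exact pdt_eq' (diffAt hu (by norm_num) hτ)
    show deriv (fun τ => pdt u (a, τ)) t = _
    rw [he.deriv_eq]
    exact (hasDerivAt_T (diffAt (contDiffOn_DT (m := 2) hu (by norm_num)) (by norm_num) ht)).deriv
  have h2 : pdx (pdx u) (a, t) = DX (DX u) (a, t) := by
    have he : (fun y => pdx u (y, t)) = fun y => DX u (y, t) :=
      funext fun y => pdx_eq' (diffAt hu (by norm_num) ht)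
    show deriv (fun y => pdx u (y, t)) a = _
    rw [he]
    exact (hasDerivAt_X (diffAt (contDiffOn_DX (m := 2) hu (by norm_num)) (by norm_num) ht)).deriv
  rw [← h1, ← h2]
  exact hwave a t ht

lemma wave3 (hu : ContDiffOn ℝ 3 u S9)
    (hW : ∀ a t : ℝ, 0 < t → DT (DT u) (a, t) = c a ^ 2 * DX (DX u) (a, t)) :
    ∀ a t : ℝ, 0 < t → DT (DT (DT u)) (a, t) = c a ^ 2 * DT (DX (DX u)) (a, t) := by
  intro a t ht
  have h1 : HasDerivAt (fun τ => DT (DT u) (a, τ)) (DT (DT (DT u)) (a, t)) t :=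
    hasDerivAt_T (diffAt (contDiffOn_DT (m := 1) (contDiffOn_DT (m := 2) hu (by norm_num)) (by norm_num))
      (by norm_num) ht)
  have h3 : HasDerivAt (fun τ => DX (DX u) (a, τ)) (DT (DX (DX u)) (a, t)) t :=
    hasDerivAt_T (diffAt (contDiffOn_DX (m := 1) (contDiffOn_DX (m := 2) hu (by norm_num)) (by norm_num))
      (by norm_num) ht)
  have h2 : HasDerivAt (fun τ => DT (DT u) (a, τ)) (c a ^ 2 * DT (DX (DX u)) (a, t)) t := by
    apply (h3.const_mul (c a ^ 2)).congr_of_eventuallyEq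
    filter_upwards [Ioi_mem_nhds ht] with τ hτ using hW a τ hτ
  exact h1.unique h2

lemma swap3 (hu : ContDiffOn ℝ 3 u S9) :
    ∀ a t : ℝ, 0 < t → DX (DX (DT u)) (a, t) = DT (DX (DX u)) (a, t) := by
  intro a t ht
  have hstep1 : ∀ q ∈ S9, DX (DT u) q = DT (DX u) q := fun q hq =>
    swapXT ((hu.contDiffAt (isOpen_S9.mem_nhds hq)).of_le (by norm_num))
  have h1 : DX (DX (DT u)) (a, t) = DX (DT (DX u)) (a, t) := DX_congr_S9 hstep1 ht
  rw [h1]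
  exact swapXT ((contDiffOn_DX (m := 2) hu (by norm_num)).contDiffAt (isOpen_S9.mem_nhds (mem_S9 ht)))

lemma pde9 (hu : ContDiffOn ℝ 3 u S9)
    (hwave : ∀ x t : ℝ, 0 < t → pdt (pdt u) (x, t) = c x ^ 2 * pdx (pdx u) (x, t))
    (a t : ℝ) (ht : 0 < t) :
    (t ^ 3 * DT (DT (DT u)) (a, t) - 5 * t ^ 2 * DT (DT u) (a, t)
        + 12 * t * DT u (a, t) - 12 * u (a, t)) / t ^ 5
      + 4 / t * ((t ^ 2 * DT (DT u) (a, t) - 3 * t * DT u (a, t) + 3 * u (a, t)) / t ^ 4)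
      = c a ^ 2 * ((t * DX (DX (DT u)) (a, t) - DX (DX u) (a, t)) / t ^ 3) := by
  have hW := waveDT hu hwave
  rw [swap3 hu a t ht, wave3 hu hW a t ht, hW a t ht]
  have h3 : t ≠ 0 := ht.ne'
  field_simp
  ring
end calc9

lemma final_alg {P Q R A E I M : ℝ} (hI : I ≠ 0) (hA : A * A = M) (hIE : I * E = M)
    (hpde : P + 4 / (3 * I) * Q = R) :
    P * -A * -A + Q * (4 / 3 * E) = M * R := by
  rw [← hpde]
  have hE : E = M / I := by rw [← hIE]; field_simp
  rw [hE, ← hA]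
  field_simp


theorem stmt_9 (c : ℝ → ℝ) (u B : ℝ × ℝ → ℝ)
    (hu : ContDiffOn ℝ 3 u {p : ℝ × ℝ | 0 < p.2})
    (hwave : ∀ x t : ℝ, 0 < t →
      pdt (pdt u) (x, t) = (c x) ^ 2 * pdx (pdx u) (x, t))
    (hB : ∀ x T : ℝ, 0 < T →
      B (x, T) = (3 * T ^ (-(1 : ℝ) / 3) * pdt u (x, 3 * T ^ (-(1 : ℝ) / 3))
          - u (x, 3 * T ^ (-(1 : ℝ) / 3))) / (3 * T ^ (-(1 : ℝ) / 3)) ^ 3) :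
    ∀ x T : ℝ, 0 < T →
      pdt (pdt B) (x, T)
        = T ^ (-(8 : ℝ) / 3) * (c x) ^ 2 * pdx (pdx B) (x, T) := by
  have hu' : ContDiffOn ℝ 3 u S9 := hu
  -- B in terms of u, DT u
  have hBv : ∀ y τ : ℝ, 0 < τ → B (y, τ) =
      (3 * τ ^ (-(1:ℝ)/3) * DT u (y, 3 * τ ^ (-(1:ℝ)/3)) - u (y, 3 * τ ^ (-(1:ℝ)/3)))
        / (3 * τ ^ (-(1:ℝ)/3)) ^ 3 := by
    intro y τ hτ
    have hs : 0 < 3 * τ ^ (-(1:ℝ)/3) := by positivity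
    rw [hB y τ hτ, pdt_eq' (diffAt hu' (by norm_num) hs)]
  -- derivative of inner map
  have hs' : ∀ τ : ℝ, 0 < τ →
      HasDerivAt (fun τ' : ℝ => 3 * τ' ^ (-(1:ℝ)/3)) (-(τ ^ (-(4:ℝ)/3))) τ := by
    intro τ hτ
    have h := (Real.hasDerivAt_rpow_const (x := τ) (p := -(1:ℝ)/3) (Or.inl hτ.ne')).const_mul
      (3:ℝ)
    refine h.congr_deriv ?_
    rw [show -(1:ℝ)/3 - 1 = -(4:ℝ)/3 by norm_num]
    ring
  -- first t-derivative of B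
  have hpdtB : ∀ y τ : ℝ, 0 < τ → pdt B (y, τ) =
      ((3 * τ ^ (-(1:ℝ)/3)) ^ 2 * DT (DT u) (y, 3 * τ ^ (-(1:ℝ)/3))
        - 3 * (3 * τ ^ (-(1:ℝ)/3)) * DT u (y, 3 * τ ^ (-(1:ℝ)/3))
        + 3 * u (y, 3 * τ ^ (-(1:ℝ)/3))) / (3 * τ ^ (-(1:ℝ)/3)) ^ 4
        * -(τ ^ (-(4:ℝ)/3)) := by
    intro y τ hτ
    have hsτ : 0 < 3 * τ ^ (-(1:ℝ)/3) := by positivity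
    have hcomp := (hvt hu' y (3 * τ ^ (-(1:ℝ)/3)) hsτ).comp τ (hs' τ hτ)
    show deriv (fun τ' => B (y, τ')) τ = _
    have he : (fun τ' => B (y, τ')) =ᶠ[𝓝 τ] fun τ' =>
        (3 * τ' ^ (-(1:ℝ)/3) * DT u (y, 3 * τ' ^ (-(1:ℝ)/3)) - u (y, 3 * τ' ^ (-(1:ℝ)/3)))
          / (3 * τ' ^ (-(1:ℝ)/3)) ^ 3 := by
      filter_upwards [Ioi_mem_nhds hτ] with τ' hτ' using hBv y τ' hτ'
    rw [he.deriv_eq]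
    exact hcomp.deriv
  intro x T hT
  have hsT : 0 < 3 * T ^ (-(1:ℝ)/3) := by positivity
  -- x-derivatives
  have hpdxB : ∀ y : ℝ, pdx B (y, T) =
      (3 * T ^ (-(1:ℝ)/3) * DX (DT u) (y, 3 * T ^ (-(1:ℝ)/3))
        - DX u (y, 3 * T ^ (-(1:ℝ)/3))) / (3 * T ^ (-(1:ℝ)/3)) ^ 3 := by
    intro y
    show deriv (fun y' => B (y', T)) y = _
    have he : (fun y' => B (y', T)) = fun y' =>
        (3 * T ^ (-(1:ℝ)/3) * DT u (y', 3 * T ^ (-(1:ℝ)/3)) - u (y', 3 * T ^ (-(1:ℝ)/3)))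
          / (3 * T ^ (-(1:ℝ)/3)) ^ 3 := funext fun y' => hBv y' T hT
    rw [he]
    exact (hvx hu' y _ hsT).deriv
  have hpdxxB : pdx (pdx B) (x, T) =
      (3 * T ^ (-(1:ℝ)/3) * DX (DX (DT u)) (x, 3 * T ^ (-(1:ℝ)/3))
        - DX (DX u) (x, 3 * T ^ (-(1:ℝ)/3))) / (3 * T ^ (-(1:ℝ)/3)) ^ 3 := by
    show deriv (fun y => pdx B (y, T)) x = _
    rw [funext hpdxB]
    exact (hvxx hu' x _ hsT).deriv
  -- second t-derivative
  have hneg : HasDerivAt (fun τ : ℝ => -(τ ^ (-(4:ℝ)/3))) ((4:ℝ)/3 * T ^ (-(7:ℝ)/3)) T := by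
    have h := (Real.hasDerivAt_rpow_const (x := T) (p := -(4:ℝ)/3) (Or.inl hT.ne')).neg
    refine h.congr_deriv ?_
    rw [show -(4:ℝ)/3 - 1 = -(7:ℝ)/3 by norm_num]
    ring
  have hG : HasDerivAt (fun τ : ℝ =>
      ((3 * τ ^ (-(1:ℝ)/3)) ^ 2 * DT (DT u) (x, 3 * τ ^ (-(1:ℝ)/3))
        - 3 * (3 * τ ^ (-(1:ℝ)/3)) * DT u (x, 3 * τ ^ (-(1:ℝ)/3))
        + 3 * u (x, 3 * τ ^ (-(1:ℝ)/3))) / (3 * τ ^ (-(1:ℝ)/3)) ^ 4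
        * -(τ ^ (-(4:ℝ)/3)))
      ((((3 * T ^ (-(1:ℝ)/3)) ^ 3 * DT (DT (DT u)) (x, 3 * T ^ (-(1:ℝ)/3))
          - 5 * (3 * T ^ (-(1:ℝ)/3)) ^ 2 * DT (DT u) (x, 3 * T ^ (-(1:ℝ)/3))
          + 12 * (3 * T ^ (-(1:ℝ)/3)) * DT u (x, 3 * T ^ (-(1:ℝ)/3))
          - 12 * u (x, 3 * T ^ (-(1:ℝ)/3))) / (3 * T ^ (-(1:ℝ)/3)) ^ 5
          * -(T ^ (-(4:ℝ)/3))) * -(T ^ (-(4:ℝ)/3))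
        + ((3 * T ^ (-(1:ℝ)/3)) ^ 2 * DT (DT u) (x, 3 * T ^ (-(1:ℝ)/3))
          - 3 * (3 * T ^ (-(1:ℝ)/3)) * DT u (x, 3 * T ^ (-(1:ℝ)/3))
          + 3 * u (x, 3 * T ^ (-(1:ℝ)/3))) / (3 * T ^ (-(1:ℝ)/3)) ^ 4
          * ((4:ℝ)/3 * T ^ (-(7:ℝ)/3))) T :=
    by have h1 := (hvtt hu' x (3 * T ^ (-(1:ℝ)/3)) hsT).comp T (hs' T hT); exact h1.mul hneg
  show deriv (fun τ => pdt B (x, τ)) T = _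
  have he2 : (fun τ => pdt B (x, τ)) =ᶠ[𝓝 T] fun τ =>
      ((3 * τ ^ (-(1:ℝ)/3)) ^ 2 * DT (DT u) (x, 3 * τ ^ (-(1:ℝ)/3))
        - 3 * (3 * τ ^ (-(1:ℝ)/3)) * DT u (x, 3 * τ ^ (-(1:ℝ)/3))
        + 3 * u (x, 3 * τ ^ (-(1:ℝ)/3))) / (3 * τ ^ (-(1:ℝ)/3)) ^ 4
        * -(τ ^ (-(4:ℝ)/3)) := by
    filter_upwards [Ioi_mem_nhds hT] with τ hτ using hpdtB x τ hτ
  rw [he2.deriv_eq, hG.deriv, hpdxxB]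
  conv_rhs => rw [mul_assoc]
  have hI : T ^ (-(1:ℝ)/3) ≠ 0 := (Real.rpow_pos_of_pos hT _).ne'
  have hA : T ^ (-(4:ℝ)/3) * T ^ (-(4:ℝ)/3) = T ^ (-(8:ℝ)/3) := by
    rw [← Real.rpow_add hT]; norm_num
  have hIE : T ^ (-(1:ℝ)/3) * T ^ (-(7:ℝ)/3) = T ^ (-(8:ℝ)/3) := by
    rw [← Real.rpow_add hT]; norm_num
  have hpde := pde9 hu' hwave x (3 * T ^ (-(1:ℝ)/3)) hsT
  rw [show (4:ℝ) / (3 * T ^ (-(1:ℝ)/3)) = 4 / (3 * T ^ (-(1:ℝ)/3)) from rfl] at hpde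
  exact final_alg hI hA hIE hpde
end

section
/- Let V : ℝ × ℝ → ℝ be twice continuously differentiable and satisfy ∂²V/∂ξ∂η(ξ,η) = 0 for all (ξ,η). Define u(x,t) = x · t · V( 1/x + 1/t, 1/x − 1/t ) for x ≠ 0, t ≠ 0. Then u satisfies the wave equation ∂²u/∂t²(x,t) = (x²/t²)² · ∂²u/∂x²(x,t) for all x ≠ 0 and all t ≠ 0. -/
private lemma contDiff_deriv' {H : ℝ → ℝ} (hH : ContDiff ℝ 2 H) : ContDiff ℝ 1 (deriv H) := by
  have h2 : ContDiff ℝ (1+1) H := by norm_num; exact hH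
  exact (contDiff_succ_iff_deriv.mp h2).2.2

/-- Generic: if `v s = c * s * H (1/s)` off `0`, then `(v'') t = c * H'' (1/t) / t^3`. -/
private lemma aux_second_deriv {H : ℝ → ℝ} (hH : ContDiff ℝ 2 H) (c : ℝ) (v : ℝ → ℝ)
    (hv : ∀ s : ℝ, s ≠ 0 → v s = c * s * H (1/s)) (t : ℝ) (ht : t ≠ 0) :
    deriv (deriv v) t = c * deriv (deriv H) (1/t) / t ^ 3 := by
  have hHd : Differentiable ℝ H := hH.differentiable two_ne_zero
  have hH'd : Differentiable ℝ (deriv H) := (contDiff_deriv' hH).differentiable one_ne_zero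
  set D1 : ℝ → ℝ := fun s => c * H (1/s) - c * ((1/s) * deriv H (1/s)) with hD1
  -- Step A: deriv v s = D1 s for s ≠ 0
  have stepA : ∀ s : ℝ, s ≠ 0 → deriv v s = D1 s := by
    intro s hs
    have hinv : HasDerivAt (fun τ : ℝ => 1/τ) (-(1/s^2)) s := by
      simpa [one_div] using hasDerivAt_inv hs
    have hHcomp : HasDerivAt (fun τ : ℝ => H (1/τ)) (deriv H (1/s) * -(1/s^2)) s :=
      (hHd.differentiableAt.hasDerivAt).comp s hinv
    have hlin : HasDerivAt (fun τ : ℝ => c * τ) c s := by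
      simpa using (hasDerivAt_id s).const_mul c
    have hmul : HasDerivAt (fun τ : ℝ => c * τ * H (1/τ))
        (c * H (1/s) + c * s * (deriv H (1/s) * -(1/s^2))) s := hlin.mul hHcomp
    have heq : v =ᶠ[nhds s] fun τ : ℝ => c * τ * H (1/τ) := by
      filter_upwards [eventually_ne_nhds hs] with τ hτ using hv τ hτ
    have := (hmul.congr_of_eventuallyEq heq).deriv
    rw [this, hD1]
    field_simp
    ring
  -- Step B: deriv (deriv v) t = deriv D1 t
  have stepB : deriv (deriv v) t = deriv D1 t := by
    apply Filter.EventuallyEq.deriv_eq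
    filter_upwards [eventually_ne_nhds ht] with s hs using stepA s hs
  -- Step C: compute deriv D1 t
  have hinv : HasDerivAt (fun τ : ℝ => 1/τ) (-(1/t^2)) t := by
    simpa [one_div] using hasDerivAt_inv ht
  have h1 : HasDerivAt (fun s : ℝ => c * H (1/s)) (c * (deriv H (1/t) * -(1/t^2))) t :=
    ((hHd.differentiableAt.hasDerivAt).comp t hinv).const_mul c
  have h2i : HasDerivAt (fun s : ℝ => (1/s) * deriv H (1/s))
      (-(1/t^2) * deriv H (1/t) + (1/t) * (deriv (deriv H) (1/t) * -(1/t^2))) t :=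
    hinv.mul ((hH'd.differentiableAt.hasDerivAt).comp t hinv)
  have hD : HasDerivAt D1
      (c * (deriv H (1/t) * -(1/t^2)) -
        c * (-(1/t^2) * deriv H (1/t) + (1/t) * (deriv (deriv H) (1/t) * -(1/t^2)))) t :=
    h1.sub (h2i.const_mul c)
  rw [stepB, hD.deriv]
  field_simp
  ring

/-- Second derivative of a sum of two affinely-composed functions. -/
private lemma aux_dd {F G : ℝ → ℝ} (hF : ContDiff ℝ 2 F) (hG : ContDiff ℝ 2 G)
    (a b e d s : ℝ) :
    deriv (deriv (fun y : ℝ => F (a + e * y) + G (b + d * y))) s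
      = e ^ 2 * deriv (deriv F) (a + e * s) + d ^ 2 * deriv (deriv G) (b + d * s) := by
  have hFd : Differentiable ℝ F := hF.differentiable two_ne_zero
  have hGd : Differentiable ℝ G := hG.differentiable two_ne_zero
  have hF'd : Differentiable ℝ (deriv F) := (contDiff_deriv' hF).differentiable one_ne_zero
  have hG'd : Differentiable ℝ (deriv G) := (contDiff_deriv' hG).differentiable one_ne_zero
  have haff : ∀ (p q y : ℝ), HasDerivAt (fun z : ℝ => p + q * z) q y := by
    intro p q y
    simpa using ((hasDerivAt_id y).const_mul q).const_add p
  have h1 : deriv (fun y : ℝ => F (a + e * y) + G (b + d * y))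
      = fun y : ℝ => e * deriv F (a + e * y) + d * deriv G (b + d * y) := by
    funext y
    have hA : HasDerivAt (fun z : ℝ => F (a + e * z)) (deriv F (a + e * y) * e) y :=
      (hFd.differentiableAt.hasDerivAt).comp y (haff a e y)
    have hB : HasDerivAt (fun z : ℝ => G (b + d * z)) (deriv G (b + d * y) * d) y :=
      (hGd.differentiableAt.hasDerivAt).comp y (haff b d y)
    rw [(hA.fun_add hB).deriv]; ring
  rw [h1]
  have hA : HasDerivAt (fun z : ℝ => e * deriv F (a + e * z))
      (e * (deriv (deriv F) (a + e * s) * e)) s :=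
    ((hF'd.differentiableAt.hasDerivAt).comp s (haff a e s)).const_mul e
  have hB : HasDerivAt (fun z : ℝ => d * deriv G (b + d * z))
      (d * (deriv (deriv G) (b + d * s) * d)) s :=
    ((hG'd.differentiableAt.hasDerivAt).comp s (haff b d s)).const_mul d
  rw [(hA.fun_add hB).deriv]; ring

theorem stmt_11 (V u : ℝ × ℝ → ℝ) (hV : ContDiff ℝ 2 V)
    (hVwave : ∀ ξ η : ℝ, pdt (pdx V) (ξ, η) = 0)
    (hu : ∀ x t : ℝ, x ≠ 0 → t ≠ 0 →
      u (x, t) = x * t * V (1 / x + 1 / t, 1 / x - 1 / t)) :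
    ∀ x t : ℝ, x ≠ 0 → t ≠ 0 →
      pdt (pdt u) (x, t) = (x ^ 2 / t ^ 2) ^ 2 * pdx (pdx u) (x, t) := by
  have hVd : Differentiable ℝ V := hV.differentiable two_ne_zero
  -- pdx V as an fderiv application
  have hpdx : pdx V = fun p : ℝ × ℝ => fderiv ℝ V p (1, 0) := by
    funext p
    have h1 : HasDerivAt (fun s : ℝ => (s, p.2)) ((1 : ℝ), (0 : ℝ)) p.1 :=
      (hasDerivAt_id p.1).prodMk (hasDerivAt_const p.1 p.2)
    exact ((hVd p).hasFDerivAt.comp_hasDerivAt p.1 h1).deriv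
  have hW : ContDiff ℝ 1 (fun p : ℝ × ℝ => fderiv ℝ V p (1, 0)) :=
    (hV.fderiv_right (by norm_num)).clm_apply contDiff_const
  -- pdx V does not depend on the second coordinate
  have hconst : ∀ ξ η : ℝ, pdx V (ξ, η) = pdx V (ξ, 0) := by
    intro ξ η
    have hdiff : Differentiable ℝ (fun s : ℝ => fderiv ℝ V (ξ, s) (1, 0)) :=
      (hW.differentiable one_ne_zero).comp ((differentiable_const ξ).prodMk differentiable_id)
    have hzero : ∀ s : ℝ, deriv (fun s : ℝ => fderiv ℝ V (ξ, s) (1, 0)) s = 0 := by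
      intro s
      have h := hVwave ξ s
      simp only [pdt, hpdx] at h
      exact h
    rw [hpdx]
    exact is_const_of_deriv_eq_zero hdiff hzero η 0
  -- decomposition V(ξ,η) = F ξ + G η
  set F : ℝ → ℝ := fun ξ => V (ξ, 0) with hFdef
  set G : ℝ → ℝ := fun η => V (0, η) - V (0, 0) with hGdef
  have hdecomp : ∀ ξ η : ℝ, V (ξ, η) = F ξ + G η := by
    intro ξ η
    have hd1 : Differentiable ℝ (fun s : ℝ => V (s, η)) :=
      hVd.comp (differentiable_id.prodMk (differentiable_const η))
    have hd2 : Differentiable ℝ (fun s : ℝ => V (s, 0)) :=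
      hVd.comp (differentiable_id.prodMk (differentiable_const 0))
    have hdiff : Differentiable ℝ (fun s : ℝ => V (s, η) - V (s, 0)) := hd1.sub hd2
    have hzero : ∀ s : ℝ, deriv (fun s : ℝ => V (s, η) - V (s, 0)) s = 0 := by
      intro s
      have d1 : HasDerivAt (fun s : ℝ => V (s, η)) (pdx V (s, η)) s :=
        (hd1 s).hasDerivAt
      have d2 : HasDerivAt (fun s : ℝ => V (s, 0)) (pdx V (s, 0)) s :=
        (hd2 s).hasDerivAt
      rw [(d1.fun_sub d2).deriv, hconst s η, sub_self]
    have hc := is_const_of_deriv_eq_zero hdiff hzero ξ 0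
    simp only [hFdef, hGdef]
    linarith [hc]
  have hFc : ContDiff ℝ 2 F := hV.comp (contDiff_id.prodMk contDiff_const)
  have hGc : ContDiff ℝ 2 G := (hV.comp (contDiff_const.prodMk contDiff_id)).sub contDiff_const
  intro x t hx ht
  -- t-direction
  set Ht : ℝ → ℝ := fun s => F (1/x + 1 * s) + G (1/x + (-1) * s) with hHtdef
  have hHtc : ContDiff ℝ 2 Ht :=
    (hFc.comp (contDiff_const.add (contDiff_const.mul contDiff_id))).add
      (hGc.comp (contDiff_const.add (contDiff_const.mul contDiff_id)))
  have hvt : ∀ s : ℝ, s ≠ 0 → u (x, s) = x * s * Ht (1/s) := by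
    intro s hs
    rw [hu x s hx hs, hdecomp]
    have e1 : 1/x + 1*(1/s) = 1/x + 1/s := by ring
    have e2 : 1/x + (-1)*(1/s) = 1/x - 1/s := by ring
    simp only [hHtdef, e1, e2]
  have hLt : pdt (pdt u) (x, t) = deriv (deriv (fun τ : ℝ => u (x, τ))) t := rfl
  have hRt := aux_second_deriv hHtc x (fun τ : ℝ => u (x, τ)) hvt t ht
  -- x-direction
  set Hx : ℝ → ℝ := fun s => F (1/t + 1 * s) + G ((-(1/t)) + 1 * s) with hHxdef
  have hHxc : ContDiff ℝ 2 Hx :=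
    (hFc.comp (contDiff_const.add (contDiff_const.mul contDiff_id))).add
      (hGc.comp (contDiff_const.add (contDiff_const.mul contDiff_id)))
  have hvx : ∀ s : ℝ, s ≠ 0 → u (s, t) = t * s * Hx (1/s) := by
    intro s hs
    rw [hu s t hs ht, hdecomp]
    have e1 : 1/t + 1*(1/s) = 1/s + 1/t := by ring
    have e2 : -(1/t) + 1*(1/s) = 1/s - 1/t := by ring
    simp only [hHxdef, e1, e2]
    ring
  have hLx : pdx (pdx u) (x, t) = deriv (deriv (fun σ : ℝ => u (σ, t))) x := rfl
  have hRx := aux_second_deriv hHxc t (fun σ : ℝ => u (σ, t)) hvx x hx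
  -- second derivatives of Ht and Hx
  have hHt2 := aux_dd hFc hGc (1/x) (1/x) 1 (-1) (1/t)
  have hHx2 := aux_dd hFc hGc (1/t) (-(1/t)) 1 1 (1/x)
  rw [hLt, hRt, hLx, hRx, hHtdef, hHxdef, hHt2, hHx2]
  have hx3 : x ^ 3 ≠ 0 := pow_ne_zero 3 hx
  have ht3 : t ^ 3 ≠ 0 := pow_ne_zero 3 ht
  have harg1 : 1/x + 1 * (1/t) = 1/t + 1 * (1/x) := by ring
  have harg2 : 1/x + (-1) * (1/t) = -(1/t) + 1 * (1/x) := by ring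
  rw [harg1, harg2]
  field_simp
end

section
/- Let ρ > 0 and let V : ℝ × ℝ → ℝ be twice continuously differentiable and satisfy ∂²V/∂ξ∂η(ξ,η) = 0 for all (ξ,η). For x > ρ and t > ρ define ξ(x,t) = (ρ/2)·log((x−ρ)/(x+ρ)) − (ρ/2)·log((t−ρ)/(t+ρ)), η(x,t) = (ρ/2)·log((x−ρ)/(x+ρ)) + (ρ/2)·log((t−ρ)/(t+ρ)), and u(x,t) = ((x²−ρ²)(t²−ρ²))^{1/2} · V(ξ(x,t), η(x,t)). Then u satisfies the wave equation ∂²u/∂t²(x,t) = ((x²−ρ²)/(t²−ρ²))² · ∂²u/∂x²(x,t) for all x > ρ and t > ρ. -/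
noncomputable def aF (ρ : ℝ) : ℝ → ℝ := fun y => (ρ/2) * (Real.log (y - ρ) - Real.log (y + ρ))
noncomputable def fS (ρ : ℝ) : ℝ → ℝ := fun y => Real.sqrt (y^2 - ρ^2)

lemma aF_eq (ρ y : ℝ) (hρ : 0 < ρ) (hy : ρ < y) :
    (ρ/2) * Real.log ((y - ρ)/(y + ρ)) = aF ρ y := by
  rw [Real.log_div (by linarith) (by linarith), aF]

lemma aF_deriv (ρ y : ℝ) (hρ : 0 < ρ) (hy : ρ < y) :
    HasDerivAt (aF ρ) (ρ^2 / (y^2 - ρ^2)) y := by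
  have h1 : HasDerivAt (fun z : ℝ => z - ρ) 1 y := (hasDerivAt_id y).sub_const ρ
  have h2 : HasDerivAt (fun z : ℝ => z + ρ) 1 y := (hasDerivAt_id y).add_const ρ
  have hl1 : HasDerivAt (fun z : ℝ => Real.log (z - ρ)) (1/(y-ρ)) y := h1.log (by linarith)
  have hl2 : HasDerivAt (fun z : ℝ => Real.log (z + ρ)) (1/(y+ρ)) y := h2.log (by linarith)
  have := ((hl1.sub hl2).const_mul (ρ/2))
  refine this.congr_deriv (Eq.symm ?_)
  have hy1 : y - ρ ≠ 0 := by linarith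
  have hy2 : y + ρ ≠ 0 := by linarith
  have hne : y^2 - ρ^2 ≠ 0 := by nlinarith
  field_simp
  ring

lemma fS_pos (ρ y : ℝ) (hρ : 0 < ρ) (hy : ρ < y) : 0 < fS ρ y := by
  apply Real.sqrt_pos.2; nlinarith

lemma fS_sq (ρ y : ℝ) (hρ : 0 < ρ) (hy : ρ < y) : (fS ρ y)^2 = y^2 - ρ^2 := by
  rw [fS, Real.sq_sqrt]; nlinarith

lemma fS_deriv (ρ y : ℝ) (hρ : 0 < ρ) (hy : ρ < y) :
    HasDerivAt (fS ρ) (y / fS ρ y) y := by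
  have hpos : (0:ℝ) < y^2 - ρ^2 := by nlinarith
  have h1 : HasDerivAt (fun z : ℝ => z^2 - ρ^2) (2*y) y := by
    simpa using ((hasDerivAt_pow 2 y).sub_const (ρ^2))
  have h2 := (Real.hasDerivAt_sqrt (ne_of_gt hpos)).comp y h1
  refine h2.congr_deriv (Eq.symm ?_)
  have := fS_pos ρ y hρ hy
  rw [fS] at *
  field_simp

lemma sqrt_split (ρ x t : ℝ) (hρ : 0 < ρ) (hx : ρ < x) :
    Real.sqrt ((x^2-ρ^2)*(t^2-ρ^2)) = fS ρ x * fS ρ t := by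
  rw [fS, fS, ← Real.sqrt_mul (by nlinarith)]

lemma lin1 (V : ℝ × ℝ → ℝ) (q : ℝ × ℝ) (r : ℝ) :
    fderiv ℝ V q (-r, r) = r * (fderiv ℝ V q (0,1) - fderiv ℝ V q (1,0)) := by
  have h : ((-r, r) : ℝ × ℝ) = r • ((0:ℝ),(1:ℝ)) - r • ((1:ℝ),(0:ℝ)) := by
    simp [Prod.ext_iff]
  rw [h, map_sub, map_smul, map_smul]
  simp [smul_eq_mul]; ring

lemma lin1' (V : ℝ × ℝ → ℝ) (q : ℝ × ℝ) (r : ℝ) :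
    fderiv ℝ V q (r, r) = r * (fderiv ℝ V q (0,1) + fderiv ℝ V q (1,0)) := by
  have h : ((r, r) : ℝ × ℝ) = r • ((0:ℝ),(1:ℝ)) + r • ((1:ℝ),(0:ℝ)) := by
    simp [Prod.ext_iff]
  rw [h, map_add, map_smul, map_smul]
  simp [smul_eq_mul]; ring

lemma lin2 (V : ℝ × ℝ → ℝ) (q : ℝ × ℝ) (r : ℝ) (w : ℝ × ℝ) :
    fderiv ℝ (fderiv ℝ V) q (-r, r) w
      = r * (fderiv ℝ (fderiv ℝ V) q (0,1) w - fderiv ℝ (fderiv ℝ V) q (1,0) w) := by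
  have h : ((-r, r) : ℝ × ℝ) = r • ((0:ℝ),(1:ℝ)) - r • ((1:ℝ),(0:ℝ)) := by
    simp [Prod.ext_iff]
  rw [h, map_sub, map_smul, map_smul]
  simp [smul_eq_mul]; ring

lemma lin2' (V : ℝ × ℝ → ℝ) (q : ℝ × ℝ) (r : ℝ) (w : ℝ × ℝ) :
    fderiv ℝ (fderiv ℝ V) q (r, r) w
      = r * (fderiv ℝ (fderiv ℝ V) q (0,1) w + fderiv ℝ (fderiv ℝ V) q (1,0) w) := by
  have h : ((r, r) : ℝ × ℝ) = r • ((0:ℝ),(1:ℝ)) + r • ((1:ℝ),(0:ℝ)) := by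
    simp [Prod.ext_iff]
  rw [h, map_add, map_smul, map_smul]
  simp [smul_eq_mul]; ring

/-- chain rule for directional derivative of fderiv along a curve -/
lemma fderiv_comp_curve (V : ℝ × ℝ → ℝ) (hV1 : Differentiable ℝ (fderiv ℝ V))
    (γ : ℝ → ℝ × ℝ) (v w : ℝ × ℝ) (t : ℝ) (hγ : HasDerivAt γ v t) :
    HasDerivAt (fun s => fderiv ℝ V (γ s) w) (fderiv ℝ (fderiv ℝ V) (γ t) v w) t := by
  have h1 : HasDerivAt (fun s => fderiv ℝ V (γ s)) (fderiv ℝ (fderiv ℝ V) (γ t) v) t :=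
    (hV1 (γ t)).hasFDerivAt.comp_hasDerivAt t hγ
  exact ((ContinuousLinearMap.apply ℝ ℝ w).hasFDerivAt.comp_hasDerivAt t h1)

/-- first derivative in the t-direction -/
lemma first_t (ρ : ℝ) (hρ : 0 < ρ) (V : ℝ × ℝ → ℝ) (hVd : Differentiable ℝ V)
    (x : ℝ) (hx : ρ < x) (s : ℝ) (hs : ρ < s) :
    HasDerivAt (fun z => fS ρ x * fS ρ z * V (aF ρ x - aF ρ z, aF ρ x + aF ρ z))
      (fS ρ x * (s / fS ρ s) * V (aF ρ x - aF ρ s, aF ρ x + aF ρ s)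
        + fS ρ x * fS ρ s * (ρ^2/(s^2-ρ^2)
            * (fderiv ℝ V (aF ρ x - aF ρ s, aF ρ x + aF ρ s) (0,1)
              - fderiv ℝ V (aF ρ x - aF ρ s, aF ρ x + aF ρ s) (1,0)))) s := by
  have hP : HasDerivAt (fun z => (aF ρ x - aF ρ z, aF ρ x + aF ρ z))
      ((-(ρ^2/(s^2-ρ^2)), ρ^2/(s^2-ρ^2)) : ℝ × ℝ) s :=
    ((aF_deriv ρ s hρ hs).const_sub (aF ρ x)).prodMk ((aF_deriv ρ s hρ hs).const_add (aF ρ x))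
  have hVc : HasDerivAt (fun z => V (aF ρ x - aF ρ z, aF ρ x + aF ρ z))
      (fderiv ℝ V (aF ρ x - aF ρ s, aF ρ x + aF ρ s) (-(ρ^2/(s^2-ρ^2)), ρ^2/(s^2-ρ^2))) s :=
    (hVd _).hasFDerivAt.comp_hasDerivAt s hP
  have h := (((fS_deriv ρ s hρ hs).const_mul (fS ρ x))).mul hVc
  refine h.congr_deriv (Eq.symm ?_)
  rw [lin1]

/-- first derivative in the x-direction -/
lemma first_x (ρ : ℝ) (hρ : 0 < ρ) (V : ℝ × ℝ → ℝ) (hVd : Differentiable ℝ V)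
    (t : ℝ) (ht : ρ < t) (s : ℝ) (hs : ρ < s) :
    HasDerivAt (fun z => fS ρ z * fS ρ t * V (aF ρ z - aF ρ t, aF ρ z + aF ρ t))
      ((s / fS ρ s) * fS ρ t * V (aF ρ s - aF ρ t, aF ρ s + aF ρ t)
        + fS ρ s * fS ρ t * (ρ^2/(s^2-ρ^2)
            * (fderiv ℝ V (aF ρ s - aF ρ t, aF ρ s + aF ρ t) (0,1)
              + fderiv ℝ V (aF ρ s - aF ρ t, aF ρ s + aF ρ t) (1,0)))) s := by
  have hP : HasDerivAt (fun z => (aF ρ z - aF ρ t, aF ρ z + aF ρ t))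
      ((ρ^2/(s^2-ρ^2), ρ^2/(s^2-ρ^2)) : ℝ × ℝ) s :=
    ((aF_deriv ρ s hρ hs).sub_const (aF ρ t)).prodMk ((aF_deriv ρ s hρ hs).add_const (aF ρ t))
  have hVc : HasDerivAt (fun z => V (aF ρ z - aF ρ t, aF ρ z + aF ρ t))
      (fderiv ℝ V (aF ρ s - aF ρ t, aF ρ s + aF ρ t) (ρ^2/(s^2-ρ^2), ρ^2/(s^2-ρ^2))) s :=
    (hVd _).hasFDerivAt.comp_hasDerivAt s hP
  have h := ((fS_deriv ρ s hρ hs).mul_const (fS ρ t)).mul hVc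
  refine h.congr_deriv (Eq.symm ?_)
  rw [lin1']

/-- second derivative in the t-direction, with mixed partials vanishing -/
lemma second_t (ρ : ℝ) (hρ : 0 < ρ) (V : ℝ × ℝ → ℝ) (hVd : Differentiable ℝ V)
    (hV1 : Differentiable ℝ (fderiv ℝ V))
    (hm1 : ∀ q : ℝ × ℝ, fderiv ℝ (fderiv ℝ V) q (0,1) (1,0) = 0)
    (hm2 : ∀ q : ℝ × ℝ, fderiv ℝ (fderiv ℝ V) q (1,0) (0,1) = 0)
    (x t : ℝ) (hx : ρ < x) (ht : ρ < t) :
    HasDerivAt (fun s => fS ρ x * (s / fS ρ s) * V (aF ρ x - aF ρ s, aF ρ x + aF ρ s)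
        + fS ρ x * fS ρ s * (ρ^2/(s^2-ρ^2)
            * (fderiv ℝ V (aF ρ x - aF ρ s, aF ρ x + aF ρ s) (0,1)
              - fderiv ℝ V (aF ρ x - aF ρ s, aF ρ x + aF ρ s) (1,0))))
      (-(ρ^2) * fS ρ x * V (aF ρ x - aF ρ t, aF ρ x + aF ρ t) / (fS ρ t)^3
        + fS ρ x * fS ρ t * (ρ^4/(t^2-ρ^2)^2)
          * (fderiv ℝ (fderiv ℝ V) (aF ρ x - aF ρ t, aF ρ x + aF ρ t) (1,0) (1,0)
            + fderiv ℝ (fderiv ℝ V) (aF ρ x - aF ρ t, aF ρ x + aF ρ t) (0,1) (0,1))) t := by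
  have hfs := fS_deriv ρ t hρ ht
  have hfspos := fS_pos ρ t hρ ht
  have hft2 : (fS ρ t)^2 = t^2 - ρ^2 := fS_sq ρ t hρ ht
  have hTpos : (0:ℝ) < t^2 - ρ^2 := by nlinarith
  have hP : HasDerivAt (fun z => (aF ρ x - aF ρ z, aF ρ x + aF ρ z))
      ((-(ρ^2/(t^2-ρ^2)), ρ^2/(t^2-ρ^2)) : ℝ × ℝ) t :=
    ((aF_deriv ρ t hρ ht).const_sub (aF ρ x)).prodMk ((aF_deriv ρ t hρ ht).const_add (aF ρ x))
  have hVc : HasDerivAt (fun z => V (aF ρ x - aF ρ z, aF ρ x + aF ρ z))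
      (fderiv ℝ V (aF ρ x - aF ρ t, aF ρ x + aF ρ t) (-(ρ^2/(t^2-ρ^2)), ρ^2/(t^2-ρ^2))) t :=
    (hVd _).hasFDerivAt.comp_hasDerivAt t hP
  have hG1 := fderiv_comp_curve V hV1 _ _ ((1:ℝ),(0:ℝ)) t hP
  have hG2 := fderiv_comp_curve V hV1 _ _ ((0:ℝ),(1:ℝ)) t hP
  have hq : HasDerivAt (fun z : ℝ => z^2 - ρ^2) (2*t) t := by
    simpa using ((hasDerivAt_pow 2 t).sub_const (ρ^2))
  have hquot : HasDerivAt (fun z : ℝ => ρ^2/(z^2-ρ^2))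
      ((0 * (t^2-ρ^2) - ρ^2 * (2*t)) / (t^2-ρ^2)^2) t :=
    (hasDerivAt_const t (ρ^2)).div hq (ne_of_gt hTpos)
  have hdiv : HasDerivAt (fun z : ℝ => z / fS ρ z)
      ((1 * fS ρ t - t * (t / fS ρ t)) / (fS ρ t)^2) t :=
    (hasDerivAt_id t).div hfs (ne_of_gt hfspos)
  have hT1 := (hdiv.const_mul (fS ρ x)).mul hVc
  have hT2 := (hfs.const_mul (fS ρ x)).mul (hquot.mul (hG2.sub hG1))
  have h := hT1.add hT2
  refine h.congr_deriv (Eq.symm ?_)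
  rw [lin1, lin2, lin2, hm1, hm2]
  rw [← hft2]
  simp only [Pi.mul_apply, Pi.sub_apply]
  have hfne : fS ρ t ≠ 0 := ne_of_gt hfspos
  field_simp
  linear_combination (-(fS ρ x * (V (aF ρ x - aF ρ t, aF ρ x + aF ρ t) * (t^2 - ρ^2) + ρ^2 * t * (fderiv ℝ V (aF ρ x - aF ρ t, aF ρ x + aF ρ t) (0,1) - fderiv ℝ V (aF ρ x - aF ρ t, aF ρ x + aF ρ t) (1,0))))) * hft2

/-- second derivative in the x-direction, with mixed partials vanishing -/
lemma second_x (ρ : ℝ) (hρ : 0 < ρ) (V : ℝ × ℝ → ℝ) (hVd : Differentiable ℝ V)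
    (hV1 : Differentiable ℝ (fderiv ℝ V))
    (hm1 : ∀ q : ℝ × ℝ, fderiv ℝ (fderiv ℝ V) q (0,1) (1,0) = 0)
    (hm2 : ∀ q : ℝ × ℝ, fderiv ℝ (fderiv ℝ V) q (1,0) (0,1) = 0)
    (x t : ℝ) (hx : ρ < x) (ht : ρ < t) :
    HasDerivAt (fun s => (s / fS ρ s) * fS ρ t * V (aF ρ s - aF ρ t, aF ρ s + aF ρ t)
        + fS ρ s * fS ρ t * (ρ^2/(s^2-ρ^2)
            * (fderiv ℝ V (aF ρ s - aF ρ t, aF ρ s + aF ρ t) (0,1)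
              + fderiv ℝ V (aF ρ s - aF ρ t, aF ρ s + aF ρ t) (1,0))))
      (-(ρ^2) * fS ρ t * V (aF ρ x - aF ρ t, aF ρ x + aF ρ t) / (fS ρ x)^3
        + fS ρ x * fS ρ t * (ρ^4/(x^2-ρ^2)^2)
          * (fderiv ℝ (fderiv ℝ V) (aF ρ x - aF ρ t, aF ρ x + aF ρ t) (1,0) (1,0)
            + fderiv ℝ (fderiv ℝ V) (aF ρ x - aF ρ t, aF ρ x + aF ρ t) (0,1) (0,1))) x := by
  have hfs := fS_deriv ρ x hρ hx
  have hfspos := fS_pos ρ x hρ hx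
  have hfx2 : (fS ρ x)^2 = x^2 - ρ^2 := fS_sq ρ x hρ hx
  have hApos : (0:ℝ) < x^2 - ρ^2 := by nlinarith
  have hP : HasDerivAt (fun z => (aF ρ z - aF ρ t, aF ρ z + aF ρ t))
      ((ρ^2/(x^2-ρ^2), ρ^2/(x^2-ρ^2)) : ℝ × ℝ) x :=
    ((aF_deriv ρ x hρ hx).sub_const (aF ρ t)).prodMk ((aF_deriv ρ x hρ hx).add_const (aF ρ t))
  have hVc : HasDerivAt (fun z => V (aF ρ z - aF ρ t, aF ρ z + aF ρ t))
      (fderiv ℝ V (aF ρ x - aF ρ t, aF ρ x + aF ρ t) (ρ^2/(x^2-ρ^2), ρ^2/(x^2-ρ^2))) x :=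
    (hVd _).hasFDerivAt.comp_hasDerivAt x hP
  have hG1 := fderiv_comp_curve V hV1 _ _ ((1:ℝ),(0:ℝ)) x hP
  have hG2 := fderiv_comp_curve V hV1 _ _ ((0:ℝ),(1:ℝ)) x hP
  have hq : HasDerivAt (fun z : ℝ => z^2 - ρ^2) (2*x) x := by
    simpa using ((hasDerivAt_pow 2 x).sub_const (ρ^2))
  have hquot : HasDerivAt (fun z : ℝ => ρ^2/(z^2-ρ^2))
      ((0 * (x^2-ρ^2) - ρ^2 * (2*x)) / (x^2-ρ^2)^2) x :=
    (hasDerivAt_const x (ρ^2)).div hq (ne_of_gt hApos)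
  have hdiv : HasDerivAt (fun z : ℝ => z / fS ρ z)
      ((1 * fS ρ x - x * (x / fS ρ x)) / (fS ρ x)^2) x :=
    (hasDerivAt_id x).div hfs (ne_of_gt hfspos)
  have hT1 := (hdiv.mul_const (fS ρ t)).mul hVc
  have hT2 := (hfs.mul_const (fS ρ t)).mul (hquot.mul (hG2.add hG1))
  have h := hT1.add hT2
  refine h.congr_deriv (Eq.symm ?_)
  rw [lin1', lin2', lin2', hm1, hm2]
  rw [← hfx2]
  simp only [Pi.mul_apply, Pi.add_apply]
  have hfne : fS ρ x ≠ 0 := ne_of_gt hfspos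
  field_simp
  linear_combination (-(fS ρ t * (V (aF ρ x - aF ρ t, aF ρ x + aF ρ t) * (x^2 - ρ^2) + ρ^2 * x * (fderiv ℝ V (aF ρ x - aF ρ t, aF ρ x + aF ρ t) (0,1) + fderiv ℝ V (aF ρ x - aF ρ t, aF ρ x + aF ρ t) (1,0))))) * hfx2

theorem stmt_12 (ρ : ℝ) (hρ : 0 < ρ) (V u : ℝ × ℝ → ℝ) (hV : ContDiff ℝ 2 V)
    (hVwave : ∀ ξ η : ℝ, pdt (pdx V) (ξ, η) = 0)
    (hu : ∀ x t : ℝ, ρ < x → ρ < t →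
      u (x, t) = Real.sqrt ((x ^ 2 - ρ ^ 2) * (t ^ 2 - ρ ^ 2)) *
        V ((ρ / 2) * Real.log ((x - ρ) / (x + ρ))
             - (ρ / 2) * Real.log ((t - ρ) / (t + ρ)),
           (ρ / 2) * Real.log ((x - ρ) / (x + ρ))
             + (ρ / 2) * Real.log ((t - ρ) / (t + ρ)))) :
    ∀ x t : ℝ, ρ < x → ρ < t →
      pdt (pdt u) (x, t)
        = ((x ^ 2 - ρ ^ 2) / (t ^ 2 - ρ ^ 2)) ^ 2 * pdx (pdx u) (x, t) := by
  have hVd : Differentiable ℝ V := hV.differentiable (by norm_num)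
  have hV1 : Differentiable ℝ (fderiv ℝ V) :=
    (hV.fderiv_right (m := 1) (by norm_num)).differentiable (by norm_num)
  -- pdx V as fderiv evaluation
  have hpdxV : ∀ q : ℝ × ℝ, pdx V q = fderiv ℝ V q (1,0) := by
    intro q
    have hcurve : HasDerivAt (fun x : ℝ => (x, q.2)) ((1:ℝ),(0:ℝ)) q.1 :=
      (hasDerivAt_id q.1).prodMk (hasDerivAt_const q.1 q.2)
    have := (hVd q).hasFDerivAt.comp_hasDerivAt q.1 hcurve
    exact this.deriv
  -- mixed second partials vanish
  have hm1 : ∀ q : ℝ × ℝ, fderiv ℝ (fderiv ℝ V) q (0,1) (1,0) = 0 := by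
    intro q
    have hw := hVwave q.1 q.2
    have hP : HasDerivAt (fun s : ℝ => ((q.1, s) : ℝ × ℝ)) ((0:ℝ),(1:ℝ)) q.2 :=
      (hasDerivAt_const q.2 q.1).prodMk (hasDerivAt_id q.2)
    have hd := fderiv_comp_curve V hV1 _ _ ((1:ℝ),(0:ℝ)) q.2 hP
    have heq : (fun s : ℝ => pdx V (q.1, s)) = fun s : ℝ => fderiv ℝ V (q.1, s) (1,0) := by
      funext s; exact hpdxV (q.1, s)
    have : pdt (pdx V) (q.1, q.2) = fderiv ℝ (fderiv ℝ V) (q.1, q.2) (0,1) (1,0) := by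
      rw [pdt]; rw [show ((q.1, q.2) : ℝ × ℝ).1 = q.1 from rfl, show ((q.1, q.2) : ℝ × ℝ).2 = q.2 from rfl]
      rw [heq]
      exact hd.deriv
    rw [← this]
    simpa using hw
  have hm2 : ∀ q : ℝ × ℝ, fderiv ℝ (fderiv ℝ V) q (1,0) (0,1) = 0 := by
    intro q
    rw [second_derivative_symmetric (fun y => (hVd y).hasFDerivAt) ((hV1 q).hasFDerivAt) _ _]
    exact hm1 q
  intro x t hx ht
  have hfxpos := fS_pos ρ x hρ hx
  have hftpos := fS_pos ρ t hρ ht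
  have hfx2 : (fS ρ x)^2 = x^2 - ρ^2 := fS_sq ρ x hρ hx
  have hft2 : (fS ρ t)^2 = t^2 - ρ^2 := fS_sq ρ t hρ ht
  -- u equals the model on the region
  have humodel : ∀ a b : ℝ, ρ < a → ρ < b →
      u (a, b) = fS ρ a * fS ρ b * V (aF ρ a - aF ρ b, aF ρ a + aF ρ b) := by
    intro a b ha hb
    rw [hu a b ha hb, sqrt_split ρ a b hρ ha, aF_eq ρ a hρ ha, aF_eq ρ b hρ hb]
  -- first derivative in t everywhere on the strip
  have hpdtu : ∀ s : ℝ, ρ < s → pdt u (x, s)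
      = fS ρ x * (s / fS ρ s) * V (aF ρ x - aF ρ s, aF ρ x + aF ρ s)
        + fS ρ x * fS ρ s * (ρ^2/(s^2-ρ^2)
            * (fderiv ℝ V (aF ρ x - aF ρ s, aF ρ x + aF ρ s) (0,1)
              - fderiv ℝ V (aF ρ x - aF ρ s, aF ρ x + aF ρ s) (1,0))) := by
    intro s hs
    have hev : (fun τ => u (x, τ)) =ᶠ[nhds s]
        (fun τ => fS ρ x * fS ρ τ * V (aF ρ x - aF ρ τ, aF ρ x + aF ρ τ)) :=
      Filter.eventuallyEq_of_mem (isOpen_Ioi.mem_nhds hs)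
        (fun τ hτ => humodel x τ hx hτ)
    have : pdt u (x, s) = deriv (fun τ => u (x, τ)) s := rfl
    rw [this, hev.deriv_eq, (first_t ρ hρ V hVd x hx s hs).deriv]
  have hpdxu : ∀ s : ℝ, ρ < s → pdx u (s, t)
      = (s / fS ρ s) * fS ρ t * V (aF ρ s - aF ρ t, aF ρ s + aF ρ t)
        + fS ρ s * fS ρ t * (ρ^2/(s^2-ρ^2)
            * (fderiv ℝ V (aF ρ s - aF ρ t, aF ρ s + aF ρ t) (0,1)
              + fderiv ℝ V (aF ρ s - aF ρ t, aF ρ s + aF ρ t) (1,0))) := by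
    intro s hs
    have hev : (fun τ => u (τ, t)) =ᶠ[nhds s]
        (fun τ => fS ρ τ * fS ρ t * V (aF ρ τ - aF ρ t, aF ρ τ + aF ρ t)) :=
      Filter.eventuallyEq_of_mem (isOpen_Ioi.mem_nhds hs)
        (fun τ hτ => humodel τ t hτ ht)
    have : pdx u (s, t) = deriv (fun τ => u (τ, t)) s := rfl
    rw [this, hev.deriv_eq, (first_x ρ hρ V hVd t ht s hs).deriv]
  -- second derivatives
  have h2t : pdt (pdt u) (x, t)
      = -(ρ^2) * fS ρ x * V (aF ρ x - aF ρ t, aF ρ x + aF ρ t) / (fS ρ t)^3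
        + fS ρ x * fS ρ t * (ρ^4/(t^2-ρ^2)^2)
          * (fderiv ℝ (fderiv ℝ V) (aF ρ x - aF ρ t, aF ρ x + aF ρ t) (1,0) (1,0)
            + fderiv ℝ (fderiv ℝ V) (aF ρ x - aF ρ t, aF ρ x + aF ρ t) (0,1) (0,1)) := by
    have hev : (fun s => pdt u (x, s)) =ᶠ[nhds t]
        (fun s => fS ρ x * (s / fS ρ s) * V (aF ρ x - aF ρ s, aF ρ x + aF ρ s)
          + fS ρ x * fS ρ s * (ρ^2/(s^2-ρ^2)
              * (fderiv ℝ V (aF ρ x - aF ρ s, aF ρ x + aF ρ s) (0,1)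
                - fderiv ℝ V (aF ρ x - aF ρ s, aF ρ x + aF ρ s) (1,0)))) :=
      Filter.eventuallyEq_of_mem (isOpen_Ioi.mem_nhds ht) (fun s hs => hpdtu s hs)
    have : pdt (pdt u) (x, t) = deriv (fun s => pdt u (x, s)) t := rfl
    rw [this, hev.deriv_eq, (second_t ρ hρ V hVd hV1 hm1 hm2 x t hx ht).deriv]
  have h2x : pdx (pdx u) (x, t)
      = -(ρ^2) * fS ρ t * V (aF ρ x - aF ρ t, aF ρ x + aF ρ t) / (fS ρ x)^3
        + fS ρ x * fS ρ t * (ρ^4/(x^2-ρ^2)^2)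
          * (fderiv ℝ (fderiv ℝ V) (aF ρ x - aF ρ t, aF ρ x + aF ρ t) (1,0) (1,0)
            + fderiv ℝ (fderiv ℝ V) (aF ρ x - aF ρ t, aF ρ x + aF ρ t) (0,1) (0,1)) := by
    have hev : (fun s => pdx u (s, t)) =ᶠ[nhds x]
        (fun s => (s / fS ρ s) * fS ρ t * V (aF ρ s - aF ρ t, aF ρ s + aF ρ t)
          + fS ρ s * fS ρ t * (ρ^2/(s^2-ρ^2)
              * (fderiv ℝ V (aF ρ s - aF ρ t, aF ρ s + aF ρ t) (0,1)
                + fderiv ℝ V (aF ρ s - aF ρ t, aF ρ s + aF ρ t) (1,0)))) :=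
      Filter.eventuallyEq_of_mem (isOpen_Ioi.mem_nhds hx) (fun s hs => hpdxu s hs)
    have : pdx (pdx u) (x, t) = deriv (fun s => pdx u (s, t)) x := rfl
    rw [this, hev.deriv_eq, (second_x ρ hρ V hVd hV1 hm1 hm2 x t hx ht).deriv]
  rw [h2t, h2x, ← hfx2, ← hft2]
  have hfxne : fS ρ x ≠ 0 := ne_of_gt hfxpos
  have hftne : fS ρ t ≠ 0 := ne_of_gt hftpos
  field_simp
end

section
/- Let ρ ≠ 0 and let V : ℝ × ℝ → ℝ be twice continuously differentiable and satisfy ∂²V/∂ξ∂η(ξ,η) = 0 for all (ξ,η). For (x,t) ∈ ℝ² define ξ(x,t) = ρ·arctan(x/ρ) − ρ·arctan(t/ρ), η(x,t) = ρ·arctan(x/ρ) + ρ·arctan(t/ρ), and u(x,t) = ((x²+ρ²)(t²+ρ²))^{1/2} · V(ξ(x,t), η(x,t)). Then u satisfies the wave equation ∂²u/∂t²(x,t) = ((x²+ρ²)/(t²+ρ²))² · ∂²u/∂x²(x,t) for all (x,t) ∈ ℝ². -/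
set_option maxHeartbeats 1000000

open Real


lemma hasDerivAt_atan (ρ : ℝ) (hρ : ρ ≠ 0) (s : ℝ) :
    HasDerivAt (fun s : ℝ => ρ * Real.arctan (s / ρ)) (ρ ^ 2 / (s ^ 2 + ρ ^ 2)) s := by
  have h1 : HasDerivAt (fun s : ℝ => s / ρ) (1 / ρ) s := (hasDerivAt_id s).div_const ρ
  have h2 := ((Real.hasDerivAt_arctan (s / ρ)).comp s h1).const_mul ρ
  refine h2.congr_deriv ?_
  have hne : (1 : ℝ) + (s / ρ) ^ 2 ≠ 0 := by positivity
  field_simp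
  ring

lemma hasDerivAt_sq (ρ : ℝ) (hρ : ρ ≠ 0) (s : ℝ) :
    HasDerivAt (fun s : ℝ => Real.sqrt (s ^ 2 + ρ ^ 2)) (s / Real.sqrt (s ^ 2 + ρ ^ 2)) s := by
  have hpos : (0 : ℝ) < s ^ 2 + ρ ^ 2 := by positivity
  have h1 : HasDerivAt (fun s : ℝ => s ^ 2 + ρ ^ 2) (2 * s) s := by
    simpa using (hasDerivAt_pow 2 s).add_const (ρ ^ 2)
  have h2 := h1.sqrt hpos.ne'
  refine h2.congr_deriv ?_
  have hs : Real.sqrt (s ^ 2 + ρ ^ 2) ≠ 0 := (Real.sqrt_pos.mpr hpos).ne'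
  field_simp

lemma key (ρ : ℝ) (hρ : ρ ≠ 0) (V : ℝ × ℝ → ℝ) (hV : ContDiff ℝ 2 V)
    (hmix : ∀ p : ℝ × ℝ,
      fderiv ℝ (fun q => fderiv ℝ V q (1, 0)) p (0, 1)
        + fderiv ℝ (fun q => fderiv ℝ V q (0, 1)) p (1, 0) = 0)
    (ε c k₁ k₂ : ℝ) (hε : ε ^ 2 = 1) (s : ℝ) :
    deriv (deriv (fun s : ℝ => c * Real.sqrt (s ^ 2 + ρ ^ 2) *
        V (k₁ + ε * (ρ * Real.arctan (s / ρ)), k₂ + ρ * Real.arctan (s / ρ)))) s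
      = c * (ρ ^ 2 / Real.sqrt (s ^ 2 + ρ ^ 2) ^ 3) *
        (V (k₁ + ε * (ρ * Real.arctan (s / ρ)), k₂ + ρ * Real.arctan (s / ρ))
          + ρ ^ 2 *
            (fderiv ℝ (fun q => fderiv ℝ V q (1, 0))
                (k₁ + ε * (ρ * Real.arctan (s / ρ)), k₂ + ρ * Real.arctan (s / ρ)) (1, 0)
              + fderiv ℝ (fun q => fderiv ℝ V q (0, 1))
                (k₁ + ε * (ρ * Real.arctan (s / ρ)), k₂ + ρ * Real.arctan (s / ρ)) (0, 1))) := by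
  set A : ℝ → ℝ := fun s => ρ * Real.arctan (s / ρ) with hA
  set a : ℝ → ℝ := fun s => Real.sqrt (s ^ 2 + ρ ^ 2) with ha
  set P : ℝ → ℝ × ℝ := fun s => (k₁ + ε * A s, k₂ + A s) with hP
  set V1 : ℝ × ℝ → ℝ := fun q => fderiv ℝ V q (1, 0) with hV1def
  set V2 : ℝ × ℝ → ℝ := fun q => fderiv ℝ V q (0, 1) with hV2def
  have hVd : Differentiable ℝ V := hV.differentiable (by norm_num)
  have hfd : ContDiff ℝ 1 (fderiv ℝ V) := hV.fderiv_right (by norm_num)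
  have hV1 : Differentiable ℝ V1 := (hfd.clm_apply contDiff_const).differentiable one_ne_zero
  have hV2 : Differentiable ℝ V2 := (hfd.clm_apply contDiff_const).differentiable one_ne_zero
  have hPd : ∀ s : ℝ, HasDerivAt P (ε * (ρ ^ 2 / (s ^ 2 + ρ ^ 2)), ρ ^ 2 / (s ^ 2 + ρ ^ 2)) s :=
    fun s => ((((hasDerivAt_atan ρ hρ s).const_mul ε).const_add k₁).prodMk
      (((hasDerivAt_atan ρ hρ s).const_add k₂)))
  have comp : ∀ (W : ℝ × ℝ → ℝ), Differentiable ℝ W → ∀ s : ℝ,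
      HasDerivAt (fun s => W (P s))
        ((ε * fderiv ℝ W (P s) (1, 0) + fderiv ℝ W (P s) (0, 1)) * (ρ ^ 2 / (s ^ 2 + ρ ^ 2))) s := by
    intro W hW s
    have h := (hW (P s)).hasFDerivAt.comp_hasDerivAt s (hPd s)
    refine h.congr_deriv ?_
    have hv : ((ε * (ρ ^ 2 / (s ^ 2 + ρ ^ 2)), ρ ^ 2 / (s ^ 2 + ρ ^ 2)) : ℝ × ℝ)
        = (ε * (ρ ^ 2 / (s ^ 2 + ρ ^ 2))) • ((1 : ℝ), (0 : ℝ))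
          + (ρ ^ 2 / (s ^ 2 + ρ ^ 2)) • ((0 : ℝ), (1 : ℝ)) := by
      simp [Prod.ext_iff]
    rw [hv, map_add, map_smul, map_smul]
    simp only [smul_eq_mul]
    ring
  -- first derivative
  have hg1 : ∀ s : ℝ, HasDerivAt (fun s => c * a s * V (P s))
      (c * ((s / a s) * V (P s)
        + a s * ((ε * V1 (P s) + V2 (P s)) * (ρ ^ 2 / (s ^ 2 + ρ ^ 2))))) s := by
    intro s
    have h1 := ((hasDerivAt_sq ρ hρ s).const_mul c).mul (comp V hVd s)
    refine h1.congr_deriv ?_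
    simp only [hV1def, hV2def]
    ring
  have hd1 : deriv (fun s : ℝ => c * a s * V (P s))
      = fun s => c * ((s / a s) * V (P s)
        + a s * ((ε * V1 (P s) + V2 (P s)) * (ρ ^ 2 / (s ^ 2 + ρ ^ 2)))) :=
    funext fun s => (hg1 s).deriv
  rw [hd1]
  -- second derivative at s
  have hapos : (0 : ℝ) < s ^ 2 + ρ ^ 2 := by positivity
  have haspos : 0 < a s := Real.sqrt_pos.mpr hapos
  have hane : a s ≠ 0 := haspos.ne'
  have hsq : a s ^ 2 = s ^ 2 + ρ ^ 2 := Real.sq_sqrt hapos.le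
  have hq : HasDerivAt (fun s : ℝ => s / a s)
      ((1 * a s - s * (s / a s)) / (a s) ^ 2) s :=
    (hasDerivAt_id s).div (hasDerivAt_sq ρ hρ s) hane
  have hr : HasDerivAt (fun s : ℝ => ρ ^ 2 / (s ^ 2 + ρ ^ 2))
      ((0 * (s ^ 2 + ρ ^ 2) - ρ ^ 2 * (2 * s)) / (s ^ 2 + ρ ^ 2) ^ 2) s := by
    have h1 : HasDerivAt (fun s : ℝ => s ^ 2 + ρ ^ 2) (2 * s) s := by
      simpa using (hasDerivAt_pow 2 s).add_const (ρ ^ 2)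
    exact (hasDerivAt_const s (ρ ^ 2)).div h1 hapos.ne'
  have hVP := comp V hVd s
  have hV1P := comp V1 hV1 s
  have hV2P := comp V2 hV2 s
  have htot := ((hq.mul hVP).add ((hasDerivAt_sq ρ hρ s).mul
      (((hV1P.const_mul ε).add hV2P).mul hr))).const_mul c
  rw [HasDerivAt.deriv (f := fun s => c * (s / a s * V (P s) + a s * ((ε * V1 (P s) + V2 (P s)) * (ρ ^ 2 / (s ^ 2 + ρ ^ 2))))) htot]
  have hPs : ((k₁ + ε * (ρ * Real.arctan (s / ρ)), k₂ + ρ * Real.arctan (s / ρ)) : ℝ × ℝ) = P s := rfl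
  rw [hPs]
  simp only [Pi.add_apply, Pi.mul_apply]
  rw [show Real.sqrt (s ^ 2 + ρ ^ 2) = a s from rfl]
  -- now pure algebra
  have hmixP := hmix (P s)
  have hε' : ε = 1 ∨ ε = -1 := by
    rcases mul_eq_zero.mp (show (ε - 1) * (ε + 1) = 0 by nlinarith) with h | h
    · left; linarith
    · right; linarith
  rw [← hsq]
  set W1 := fderiv ℝ V1 (P s) (1, 0)
  set W12 := fderiv ℝ V1 (P s) (0, 1)
  set W21 := fderiv ℝ V2 (P s) (1, 0)
  set W2 := fderiv ℝ V2 (P s) (0, 1)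
  have h21 : W21 = -W12 := by linarith
  rw [h21]
  rcases hε' with h | h <;> subst h <;> field_simp
  · linear_combination (c * V (P s)) * hsq
  · linear_combination (c * V (P s)) * hsq

lemma alg (c d r M : ℝ) (hc : 0 < c) (hd : 0 < d) :
    Real.sqrt c * (r / Real.sqrt d ^ 3) * M
      = (c / d) ^ 2 * (Real.sqrt d * (r / Real.sqrt c ^ 3) * M) := by
  set a := Real.sqrt c with hadef
  set b := Real.sqrt d with hbdef
  have ha2 : a ^ 2 = c := Real.sq_sqrt hc.le
  have hb2 : b ^ 2 = d := Real.sq_sqrt hd.le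
  have ha0 : a ≠ 0 := (Real.sqrt_pos.mpr hc).ne'
  have hb0 : b ≠ 0 := (Real.sqrt_pos.mpr hd).ne'
  rw [← ha2, ← hb2]
  field_simp

theorem stmt_13 (ρ : ℝ) (hρ : ρ ≠ 0) (V u : ℝ × ℝ → ℝ) (hV : ContDiff ℝ 2 V)
    (hVwave : ∀ ξ η : ℝ, pdt (pdx V) (ξ, η) = 0)
    (hu : ∀ x t : ℝ,
      u (x, t) = Real.sqrt ((x ^ 2 + ρ ^ 2) * (t ^ 2 + ρ ^ 2)) *
        V (ρ * Real.arctan (x / ρ) - ρ * Real.arctan (t / ρ),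
           ρ * Real.arctan (x / ρ) + ρ * Real.arctan (t / ρ))) :
    ∀ x t : ℝ,
      pdt (pdt u) (x, t)
        = ((x ^ 2 + ρ ^ 2) / (t ^ 2 + ρ ^ 2)) ^ 2 * pdx (pdx u) (x, t) := by
  intro x t
  have hVd : Differentiable ℝ V := hV.differentiable (by norm_num)
  have hfd : ContDiff ℝ 1 (fderiv ℝ V) := hV.fderiv_right (by norm_num)
  have hV1 : Differentiable ℝ (fun q : ℝ × ℝ => fderiv ℝ V q (1, 0)) :=
    (hfd.clm_apply contDiff_const).differentiable one_ne_zero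
  have hV2 : Differentiable ℝ (fun q : ℝ × ℝ => fderiv ℝ V q (0, 1)) :=
    (hfd.clm_apply contDiff_const).differentiable one_ne_zero
  have hpdxV : ∀ p : ℝ × ℝ, pdx V p = fderiv ℝ V p (1, 0) := by
    intro p
    have hcurve : HasDerivAt (fun y : ℝ => ((y, p.2) : ℝ × ℝ)) ((1 : ℝ), (0 : ℝ)) p.1 :=
      (hasDerivAt_id p.1).prodMk (hasDerivAt_const p.1 p.2)
    have h := (hVd (p.1, p.2)).hasFDerivAt.comp_hasDerivAt p.1 hcurve
    simp only [Prod.mk.eta] at h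
    exact h.deriv
  have hdir2 : ∀ (W : ℝ × ℝ → ℝ), Differentiable ℝ W → ∀ p : ℝ × ℝ,
      deriv (fun τ => W (p.1, τ)) p.2 = fderiv ℝ W p (0, 1) := by
    intro W hW p
    have hcurve : HasDerivAt (fun τ : ℝ => ((p.1, τ) : ℝ × ℝ)) ((0 : ℝ), (1 : ℝ)) p.2 :=
      (hasDerivAt_const p.2 p.1).prodMk (hasDerivAt_id p.2)
    have h := (hW (p.1, p.2)).hasFDerivAt.comp_hasDerivAt p.2 hcurve
    simp only [Prod.mk.eta] at h
    exact h.deriv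
  have hmix1 : ∀ p : ℝ × ℝ, fderiv ℝ (fun q : ℝ × ℝ => fderiv ℝ V q (1, 0)) p (0, 1) = 0 := by
    intro p
    have hw := hVwave p.1 p.2
    have he : pdt (pdx V) (p.1, p.2)
        = deriv (fun τ => fderiv ℝ V (p.1, τ) (1, 0)) p.2 := by
      simp only [pdt]
      congr 1
      funext τ
      exact hpdxV (p.1, τ)
    rw [he] at hw
    exact (hdir2 _ hV1 p).symm.trans hw
  have happ : ∀ (v p w : ℝ × ℝ), fderiv ℝ (fun q => fderiv ℝ V q v) p w
      = fderiv ℝ (fderiv ℝ V) p w v := by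
    intro v p w
    have hd : HasFDerivAt (fun q : ℝ × ℝ => fderiv ℝ V q v)
        ((ContinuousLinearMap.apply ℝ ℝ v).comp (fderiv ℝ (fderiv ℝ V) p)) p :=
      (ContinuousLinearMap.apply ℝ ℝ v).hasFDerivAt.comp p
        ((hfd.differentiable one_ne_zero p).hasFDerivAt)
    rw [hd.fderiv]
    rfl
  have hsymm : ∀ (p v w : ℝ × ℝ),
      fderiv ℝ (fderiv ℝ V) p v w = fderiv ℝ (fderiv ℝ V) p w v := fun p v w =>
    second_derivative_symmetric (fun y => (hVd y).hasFDerivAt)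
      ((hfd.differentiable one_ne_zero p).hasFDerivAt) v w
  have hmix : ∀ p : ℝ × ℝ,
      fderiv ℝ (fun q => fderiv ℝ V q (1, 0)) p (0, 1)
        + fderiv ℝ (fun q => fderiv ℝ V q (0, 1)) p (1, 0) = 0 := by
    intro p
    have h2 : fderiv ℝ (fun q : ℝ × ℝ => fderiv ℝ V q (0, 1)) p (1, 0)
        = fderiv ℝ (fun q : ℝ × ℝ => fderiv ℝ V q (1, 0)) p (0, 1) := by
      rw [happ, happ, hsymm]
    rw [h2, hmix1 p, add_zero]
  -- rewrite the two slice functions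
  have hgt : (fun τ : ℝ => u (x, τ)) = fun τ : ℝ =>
      Real.sqrt (x ^ 2 + ρ ^ 2) * Real.sqrt (τ ^ 2 + ρ ^ 2) *
        V (ρ * Real.arctan (x / ρ) + (-1) * (ρ * Real.arctan (τ / ρ)),
           ρ * Real.arctan (x / ρ) + ρ * Real.arctan (τ / ρ)) := by
    funext τ
    rw [hu x τ, Real.sqrt_mul (by positivity)]
    have h1 : ρ * Real.arctan (x / ρ) - ρ * Real.arctan (τ / ρ)
        = ρ * Real.arctan (x / ρ) + (-1) * (ρ * Real.arctan (τ / ρ)) := by ring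
    rw [h1]
  have hgx : (fun y : ℝ => u (y, t)) = fun y : ℝ =>
      Real.sqrt (t ^ 2 + ρ ^ 2) * Real.sqrt (y ^ 2 + ρ ^ 2) *
        V (-(ρ * Real.arctan (t / ρ)) + 1 * (ρ * Real.arctan (y / ρ)),
           ρ * Real.arctan (t / ρ) + ρ * Real.arctan (y / ρ)) := by
    funext y
    rw [hu y t, Real.sqrt_mul (by positivity)]
    have h1 : ρ * Real.arctan (y / ρ) - ρ * Real.arctan (t / ρ)
        = -(ρ * Real.arctan (t / ρ)) + 1 * (ρ * Real.arctan (y / ρ)) := by ring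
    have h2 : ρ * Real.arctan (y / ρ) + ρ * Real.arctan (t / ρ)
        = ρ * Real.arctan (t / ρ) + ρ * Real.arctan (y / ρ) := by ring
    rw [h1, h2]
    ring
  have e2 : pdt (pdt u) (x, t) = deriv (deriv (fun τ : ℝ => u (x, τ))) t := rfl
  have e1 : pdx (pdx u) (x, t) = deriv (deriv (fun y : ℝ => u (y, t))) x := rfl
  rw [e2, e1, hgt, hgx,
    key ρ hρ V hV hmix (-1) (Real.sqrt (x ^ 2 + ρ ^ 2)) (ρ * Real.arctan (x / ρ))
      (ρ * Real.arctan (x / ρ)) (by norm_num) t,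
    key ρ hρ V hV hmix 1 (Real.sqrt (t ^ 2 + ρ ^ 2)) (-(ρ * Real.arctan (t / ρ)))
      (ρ * Real.arctan (t / ρ)) (by norm_num) x]
  have hpt : ((ρ * Real.arctan (x / ρ) + (-1) * (ρ * Real.arctan (t / ρ)),
      ρ * Real.arctan (x / ρ) + ρ * Real.arctan (t / ρ)) : ℝ × ℝ)
      = (-(ρ * Real.arctan (t / ρ)) + 1 * (ρ * Real.arctan (x / ρ)),
      ρ * Real.arctan (t / ρ) + ρ * Real.arctan (x / ρ)) := by
    simp only [Prod.mk.injEq]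
    constructor <;> ring
  rw [hpt]
  have hax : (0 : ℝ) < x ^ 2 + ρ ^ 2 := by positivity
  have hat : (0 : ℝ) < t ^ 2 + ρ ^ 2 := by positivity
  exact alg _ _ _ _ hax hat
end

section
/- Let V : ℝ × ℝ → ℝ be twice continuously differentiable and satisfy ∂²V/∂ξ∂η(ξ,η) = 0 for all (ξ,η). Define u(x,t) = x · V( 1/x + t, 1/x − t ) for x ≠ 0. Then u satisfies the wave equation ∂²u/∂t²(x,t) = x⁴ · ∂²u/∂x²(x,t) for all x ≠ 0 and all t. -/
theorem clm_expand' (L : ℝ×ℝ →L[ℝ] ℝ) (p q : ℝ) : L (p,q) = p * L (1,0) + q * L (0,1) := by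
  have h : ((p, q) : ℝ×ℝ) = p • ((1:ℝ),(0:ℝ)) + q • ((0:ℝ),(1:ℝ)) := by simp
  rw [h]; simp only [map_add, map_smul, smul_eq_mul]

theorem clm2_expand' (M : ℝ×ℝ →L[ℝ] (ℝ×ℝ →L[ℝ] ℝ)) (p q r s : ℝ) :
    M (p,q) (r,s) = p*(r*M (1,0) (1,0) + s*M (1,0) (0,1)) + q*(r*M (0,1) (1,0) + s*M (0,1) (0,1)) := by
  have h : ((p, q) : ℝ×ℝ) = p • ((1:ℝ),(0:ℝ)) + q • ((0:ℝ),(1:ℝ)) := by simp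
  have h2 : ((r, s) : ℝ×ℝ) = r • ((1:ℝ),(0:ℝ)) + s • ((0:ℝ),(1:ℝ)) := by simp
  rw [h, h2]
  simp only [map_add, map_smul, ContinuousLinearMap.add_apply, ContinuousLinearMap.smul_apply,
    smul_eq_mul]
  ring

theorem stmt_14 (V u : ℝ × ℝ → ℝ) (hV : ContDiff ℝ 2 V)
    (hVwave : ∀ ξ η : ℝ, pdt (pdx V) (ξ, η) = 0)
    (hu : ∀ x t : ℝ, x ≠ 0 → u (x, t) = x * V (1 / x + t, 1 / x - t)) :
    ∀ x t : ℝ, x ≠ 0 →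
      pdt (pdt u) (x, t) = x ^ 4 * pdx (pdx u) (x, t) := by
  have hVdiff : Differentiable ℝ V := hV.differentiable two_ne_zero
  have hB1 : ContDiff ℝ 1 (fderiv ℝ V) := hV.fderiv_right (le_refl 2)
  have hBdiff : Differentiable ℝ (fderiv ℝ V) := hB1.differentiable one_ne_zero
  set B : ℝ×ℝ → (ℝ×ℝ →L[ℝ] ℝ) := fderiv ℝ V with hBdef
  set W : ℝ×ℝ → (ℝ×ℝ →L[ℝ] (ℝ×ℝ →L[ℝ] ℝ)) := fderiv ℝ B with hWdef
  have hWd : ∀ p : ℝ×ℝ, HasFDerivAt B (W p) p := fun p => (hBdiff p).hasFDerivAt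
  -- identify pdx V with B · (1,0)
  have hpdxV : ∀ q : ℝ×ℝ, pdx V q = B q (1,0) := by
    intro q
    have hc : HasDerivAt (fun x : ℝ => ((x, q.2) : ℝ×ℝ)) ((1:ℝ),(0:ℝ)) q.1 :=
      HasDerivAt.prodMk (hasDerivAt_id q.1) (hasDerivAt_const q.1 q.2)
    have := (hVdiff (q.1, q.2)).hasFDerivAt.comp_hasDerivAt q.1 hc
    simpa [pdx, Function.comp_def] using this.deriv
  -- mixed second partials vanish
  have hW10 : ∀ p : ℝ×ℝ, W p (0,1) (1,0) = 0 := by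
    intro p
    have hc : HasDerivAt (fun s : ℝ => ((p.1, s) : ℝ×ℝ)) ((0:ℝ),(1:ℝ)) p.2 :=
      HasDerivAt.prodMk (hasDerivAt_const p.2 p.1) (hasDerivAt_id p.2)
    have hBc : HasDerivAt (fun s : ℝ => B (p.1, s)) (W (p.1, p.2) (0,1)) p.2 :=
      (hWd (p.1, p.2)).comp_hasDerivAt p.2 hc
    have happ := hBc.clm_apply (hasDerivAt_const p.2 (((1:ℝ),(0:ℝ)) : ℝ×ℝ))
    have hkey : deriv (fun s => B (p.1, s) (1,0)) p.2
        = W (p.1, p.2) (0,1) (1,0) := by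
      simpa using happ.deriv
    have hfun : (fun s => pdx V (p.1, s)) = fun s => B (p.1, s) (1,0) :=
      funext fun s => hpdxV (p.1, s)
    have := hVwave p.1 p.2
    simp only [pdt, hfun] at this
    rw [← hkey]
    simpa using this
  have hsymm : ∀ p : ℝ×ℝ, ∀ v w, W p v w = W p w v := fun p v w =>
    second_derivative_symmetric (fun y => (hVdiff y).hasFDerivAt) (hWd p) v w
  have hW01 : ∀ p : ℝ×ℝ, W p (1,0) (0,1) = 0 := fun p => (hsymm p _ _).trans (hW10 p)
  -- formula for pdt u
  have hpdtu : ∀ x' t' : ℝ, x' ≠ 0 →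
      pdt u (x', t') = x' * B (1/x' + t', 1/x' - t') (1,-1) := by
    intro x' t' hx'
    have hfun : (fun s => u (x', s)) = fun s => x' * V (1/x' + s, 1/x' - s) :=
      funext fun s => hu x' s hx'
    have hc : HasDerivAt (fun s : ℝ => ((1/x' + s, 1/x' - s) : ℝ×ℝ)) ((1:ℝ),(-1:ℝ)) t' := by
      have h1 : HasDerivAt (fun s : ℝ => 1/x' + s) 1 t' := (hasDerivAt_id t').const_add (1/x')
      have h2 : HasDerivAt (fun s : ℝ => 1/x' - s) (-1) t' := by
        simpa using (hasDerivAt_id t').const_sub (1/x')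
      exact HasDerivAt.prodMk h1 h2
    have := ((hVdiff _).hasFDerivAt.comp_hasDerivAt t' hc).const_mul x'
    simpa [pdt, hfun, Function.comp] using this.deriv
  -- formula for pdx u
  have hpdxu : ∀ y t' : ℝ, y ≠ 0 →
      pdx u (y, t') = V (1/y + t', 1/y - t') - B (1/y + t', 1/y - t') (1,1) / y := by
    intro y t' hy
    have hev : (fun z => u (z, t')) =ᶠ[nhds y] fun z => z * V (1/z + t', 1/z - t') :=
      (eventually_ne_nhds hy).mono fun z hz => hu z t' hz
    have hinv : HasDerivAt (fun z : ℝ => 1/z) (-(y^2)⁻¹) y := by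
      simpa [one_div] using hasDerivAt_inv hy
    have hγ : HasDerivAt (fun z : ℝ => ((1/z + t', 1/z - t') : ℝ×ℝ))
        ((-(y^2)⁻¹ : ℝ), (-(y^2)⁻¹ : ℝ)) y := HasDerivAt.prodMk (hinv.add_const t') (hinv.sub_const t')
    have hVγ := (hVdiff _).hasFDerivAt.comp_hasDerivAt y hγ
    have hmul : HasDerivAt (fun z : ℝ => z * V (1/z + t', 1/z - t'))
        (1 * V (1/y + t', 1/y - t')
          + y * B (1/y + t', 1/y - t') ((-(y^2)⁻¹ : ℝ), (-(y^2)⁻¹ : ℝ))) y :=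
      (hasDerivAt_id y).mul hVγ
    have hd : pdx u (y, t') = deriv (fun z => z * V (1/z + t', 1/z - t')) y := by
      have : pdx u (y, t') = deriv (fun z => u (z, t')) y := rfl
      rw [this]; exact hev.deriv_eq
    rw [hd, hmul.deriv]
    have hBsmul : B (1/y + t', 1/y - t') ((-(y^2)⁻¹ : ℝ), (-(y^2)⁻¹ : ℝ))
        = -(y^2)⁻¹ * B (1/y + t', 1/y - t') (1,1) := by
      have h : ((-(y^2)⁻¹ : ℝ), (-(y^2)⁻¹ : ℝ)) = (-(y^2)⁻¹ : ℝ) • ((1:ℝ),(1:ℝ)) := by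
        rw [Prod.smul_mk]; norm_num
      rw [h, map_smul, smul_eq_mul]
    rw [hBsmul]
    field_simp
    ring
  intro x t hx
  set a : ℝ×ℝ := (1/x + t, 1/x - t) with ha
  -- second t-derivative
  have hc : HasDerivAt (fun s : ℝ => ((1/x + s, 1/x - s) : ℝ×ℝ)) ((1:ℝ),(-1:ℝ)) t := by
    have h1 : HasDerivAt (fun s : ℝ => 1/x + s) 1 t := (hasDerivAt_id t).const_add (1/x)
    have h2 : HasDerivAt (fun s : ℝ => 1/x - s) (-1) t := by
      simpa using (hasDerivAt_id t).const_sub (1/x)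
    exact HasDerivAt.prodMk h1 h2
  have hBγt : HasDerivAt (fun s : ℝ => B (1/x + s, 1/x - s)) (W a (1,-1)) t :=
    (hWd a).comp_hasDerivAt t hc
  have htt : pdt (pdt u) (x, t) = x * W a (1,-1) (1,-1) := by
    have hfun : (fun s => pdt u (x, s)) = fun s => x * B (1/x + s, 1/x - s) (1,-1) :=
      funext fun s => hpdtu x s hx
    have happ := (hBγt.clm_apply (hasDerivAt_const t (((1:ℝ),(-1:ℝ)) : ℝ×ℝ))).const_mul x
    have : pdt (pdt u) (x, t) = deriv (fun s => pdt u (x, s)) t := rfl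
    rw [this, hfun]
    simpa using happ.deriv
  -- second x-derivative
  have hinv : HasDerivAt (fun z : ℝ => 1/z) (-(x^2)⁻¹) x := by
    simpa [one_div] using hasDerivAt_inv hx
  have hγ : HasDerivAt (fun z : ℝ => ((1/z + t, 1/z - t) : ℝ×ℝ))
      ((-(x^2)⁻¹ : ℝ), (-(x^2)⁻¹ : ℝ)) x := HasDerivAt.prodMk (hinv.add_const t) (hinv.sub_const t)
  have hVγ := (hVdiff _).hasFDerivAt.comp_hasDerivAt x hγ
  have hBγx : HasDerivAt (fun z : ℝ => B (1/z + t, 1/z - t) (1,1))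
      (W a ((-(x^2)⁻¹ : ℝ), (-(x^2)⁻¹ : ℝ)) (1,1)) x := by
    have hBc : HasDerivAt (fun z : ℝ => B (1/z + t, 1/z - t)) (W a ((-(x^2)⁻¹ : ℝ), (-(x^2)⁻¹ : ℝ))) x :=
      (hWd a).comp_hasDerivAt x hγ
    have := HasDerivAt.clm_apply hBc (hasDerivAt_const x (((1:ℝ),(1:ℝ)) : ℝ×ℝ))
    simpa using this
  have hdiv := hBγx.div (hasDerivAt_id x) hx
  have hsub : HasDerivAt (fun y : ℝ => V (1/y + t, 1/y - t) - B (1/y + t, 1/y - t) (1,1) / y)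
      (B a ((-(x^2)⁻¹ : ℝ), (-(x^2)⁻¹ : ℝ))
        - (W a ((-(x^2)⁻¹ : ℝ), (-(x^2)⁻¹ : ℝ)) (1,1) * x
           - B a (1,1) * 1) / x ^ 2) x := hVγ.sub hdiv
  have hxx : pdx (pdx u) (x, t)
      = B a ((-(x^2)⁻¹ : ℝ), (-(x^2)⁻¹ : ℝ))
        - (W a ((-(x^2)⁻¹ : ℝ), (-(x^2)⁻¹ : ℝ)) (1,1) * x
           - B a (1,1) * 1) / x ^ 2 := by
    have hev : (fun y => pdx u (y, t)) =ᶠ[nhds x]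
        fun y => V (1/y + t, 1/y - t) - B (1/y + t, 1/y - t) (1,1) / y :=
      (eventually_ne_nhds hx).mono fun y hy => hpdxu y t hy
    have h0 : pdx (pdx u) (x, t) = deriv (fun y => pdx u (y, t)) x := rfl
    rw [h0, hev.deriv_eq]
    exact hsub.deriv
  rw [htt, hxx]
  rw [clm2_expand' (W a) 1 (-1) 1 (-1),
    clm2_expand' (W a) (-(x^2)⁻¹) (-(x^2)⁻¹) 1 1,
    clm_expand' (B a) (-(x^2)⁻¹) (-(x^2)⁻¹),
    clm_expand' (B a) 1 1, hW10 a, hW01 a]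
  field_simp
  ring
end

section
/- Let u : ℝ × ℝ → ℝ be twice continuously differentiable on {(x,t) : x > 0} and satisfy the wave equation ∂²u/∂t²(x,t) = x⁴ · ∂²u/∂x²(x,t) for all x > 0 and all t. Then there exist twice continuously differentiable functions F, G : ℝ → ℝ such that u(x,t) = x · ( F(1/x + t) + G(1/x − t) ) for all x > 0 and all t. -/
open Set Filter Topology

noncomputable section
namespace Wave15

abbrev D : Set (ℝ × ℝ) := {p : ℝ × ℝ | 0 < p.1}
lemma isOpen_D : IsOpen D := isOpen_lt continuous_const continuous_fst
variable {u : ℝ × ℝ → ℝ}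


lemma hud (hu : ContDiffOn ℝ 2 u D) {q : ℝ × ℝ} (hq : q ∈ D) :
    DifferentiableAt ℝ u q :=
  ((hu q hq).contDiffAt (isOpen_D.mem_nhds hq)).differentiableAt two_ne_zero
lemma hu1 (hu : ContDiffOn ℝ 2 u D) : ContDiffOn ℝ 1 (fderiv ℝ u) D := by
  have h2 : (2 : WithTop ℕ∞) = 1 + 1 := by norm_num
  exact ((contDiffOn_succ_iff_fderiv_of_isOpen (n := 1) isOpen_D).mp (h2 ▸ hu)).2.2
lemma hdud (hu : ContDiffOn ℝ 2 u D) {q : ℝ × ℝ} (hq : q ∈ D) :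
    DifferentiableAt ℝ (fderiv ℝ u) q :=
  ((hu1 hu q hq).contDiffAt (isOpen_D.mem_nhds hq)).differentiableAt one_ne_zero
lemma hasFDerivAt_dirDeriv (hu : ContDiffOn ℝ 2 u D) {q : ℝ × ℝ} (hq : q ∈ D) (v : ℝ × ℝ) :
    HasFDerivAt (fun p => fderiv ℝ u p v)
      ((ContinuousLinearMap.apply ℝ ℝ v).comp (fderiv ℝ (fderiv ℝ u) q)) q :=
  (ContinuousLinearMap.apply ℝ ℝ v).hasFDerivAt.comp q (hdud hu hq).hasFDerivAt
lemma clm_eval (L : ℝ × ℝ →L[ℝ] ℝ) (v : ℝ × ℝ) :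
    L v = v.1 * L (1, 0) + v.2 * L (0, 1) := by
  have h : v = v.1 • ((1:ℝ), (0:ℝ)) + v.2 • ((0:ℝ), (1:ℝ)) := by simp [Prod.ext_iff]
  conv_lhs => rw [h]
  rw [map_add, map_smul, map_smul, smul_eq_mul, smul_eq_mul]
lemma clm2_eval (L : ℝ × ℝ →L[ℝ] (ℝ × ℝ →L[ℝ] ℝ)) (v w : ℝ × ℝ) :
    L v w = v.1 * L (1, 0) w + v.2 * L (0, 1) w := by
  have h : v = v.1 • ((1:ℝ), (0:ℝ)) + v.2 • ((0:ℝ), (1:ℝ)) := by simp [Prod.ext_iff]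
  conv_lhs => rw [h]
  rw [map_add, map_smul, map_smul]; simp
lemma curve_x (t x : ℝ) : HasDerivAt (fun x' : ℝ => (x', t)) ((1:ℝ), (0:ℝ)) x :=
  (hasDerivAt_id x).prodMk (hasDerivAt_const x t)
lemma curve_t (x t : ℝ) : HasDerivAt (fun t' : ℝ => (x, t')) ((0:ℝ), (1:ℝ)) t :=
  (hasDerivAt_const t x).prodMk (hasDerivAt_id t)
lemma pdx_eq (hu : ContDiffOn ℝ 2 u D) {q : ℝ × ℝ} (hq : q ∈ D) :
    pdx u q = fderiv ℝ u q (1, 0) :=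
  ((hud hu hq).hasFDerivAt.comp_hasDerivAt q.1 (curve_x q.2 q.1)).deriv
lemma pdt_eq (hu : ContDiffOn ℝ 2 u D) {q : ℝ × ℝ} (hq : q ∈ D) :
    pdt u q = fderiv ℝ u q (0, 1) :=
  ((hud hu hq).hasFDerivAt.comp_hasDerivAt q.2 (curve_t q.1 q.2)).deriv
lemma pdxx_eq (hu : ContDiffOn ℝ 2 u D) {x t : ℝ} (hx : 0 < x) :
    pdx (pdx u) (x, t) = fderiv ℝ (fderiv ℝ u) (x, t) (1, 0) (1, 0) := by
  have heq : (fun x' => pdx u (x', t)) =ᶠ[𝓝 x] fun x' => fderiv ℝ u (x', t) (1, 0) := by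
    filter_upwards [isOpen_Ioi.eventually_mem hx] with x' hx'
    exact pdx_eq hu (show (0:ℝ) < x' from hx')
  have hD : HasDerivAt (fun x' => fderiv ℝ u (x', t) (1, 0))
      (fderiv ℝ (fderiv ℝ u) (x, t) (1, 0) (1, 0)) x := by
    simpa [Function.comp_def] using (hasFDerivAt_dirDeriv hu (show (0:ℝ) < x from hx)
      ((1:ℝ),(0:ℝ))).comp_hasDerivAt x (curve_x t x)
  show deriv (fun x' => pdx u (x', t)) x = _
  rw [heq.deriv_eq]; exact hD.deriv
lemma pdtt_eq (hu : ContDiffOn ℝ 2 u D) {x t : ℝ} (hx : 0 < x) :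
    pdt (pdt u) (x, t) = fderiv ℝ (fderiv ℝ u) (x, t) (0, 1) (0, 1) := by
  have heq : (fun t' => pdt u (x, t')) = fun t' => fderiv ℝ u (x, t') (0, 1) := by
    funext t'; exact pdt_eq hu (show (0:ℝ) < x from hx)
  have hD : HasDerivAt (fun t' => fderiv ℝ u (x, t') (0, 1))
      (fderiv ℝ (fderiv ℝ u) (x, t) (0, 1) (0, 1)) t := by
    simpa [Function.comp_def] using (hasFDerivAt_dirDeriv hu (show (0:ℝ) < x from hx)
      ((0:ℝ),(1:ℝ))).comp_hasDerivAt t (curve_t x t)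
  show deriv (fun t' => pdt u (x, t')) t = _
  rw [heq]; exact hD.deriv
lemma symm_mixed (hu : ContDiffOn ℝ 2 u D) {q : ℝ × ℝ} (hq : q ∈ D) (v w : ℝ × ℝ) :
    fderiv ℝ (fderiv ℝ u) q v w = fderiv ℝ (fderiv ℝ u) q w v :=
  (((hu q hq).contDiffAt (isOpen_D.mem_nhds hq)).isSymmSndFDerivAt (by norm_num)) v w

def E (u : ℝ × ℝ → ℝ) : ℝ × ℝ → ℝ :=
  fun q => (u q - q.1 * fderiv ℝ u q (1, 0) + fderiv ℝ u q (0, 1) / q.1) / 2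

lemma stepB (hu : ContDiffOn ℝ 2 u D)
    (hwave : ∀ x t : ℝ, 0 < x → pdt (pdt u) (x, t) = x ^ 4 * pdx (pdx u) (x, t))
    {a b : ℝ} (hab : 0 < a + b) :
    HasDerivAt (fun s => E u (2 / (a + s), (a - s) / 2)) 0 b := by
  have hne : a + b ≠ 0 := ne_of_gt hab
  have hxpos : (0:ℝ) < 2 / (a + b) := by positivity
  have hxne : (2:ℝ) / (a + b) ≠ 0 := ne_of_gt hxpos
  have hq : ((2 / (a + b), (a - b) / 2) : ℝ × ℝ) ∈ D := hxpos
  have h1 : HasDerivAt (fun s : ℝ => a + s) 1 b := by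
    simpa using (hasDerivAt_id b).const_add a
  have hx1 : HasDerivAt (fun s : ℝ => 2 / (a + s)) (-2 / (a + b) ^ 2) b := by
    have := (hasDerivAt_const b (2:ℝ)).div h1 hne
    exact this.congr_deriv (by ring)
  have ht1 : HasDerivAt (fun s : ℝ => (a - s) / 2) (-1 / 2) b := by
    simpa using ((hasDerivAt_id b).const_sub a).div_const 2
  have hc : HasDerivAt (fun s : ℝ => ((2 / (a + s), (a - s) / 2) : ℝ × ℝ))
      ((-2 / (a + b) ^ 2, -1 / 2) : ℝ × ℝ) b := hx1.prodMk ht1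
  have huc : HasDerivAt (fun s => u (2 / (a + s), (a - s) / 2))
      (fderiv ℝ u (2 / (a + b), (a - b) / 2) (-2 / (a + b) ^ 2, -1 / 2)) b :=
    (hud hu hq).hasFDerivAt.comp_hasDerivAt b hc
  have hU1c : HasDerivAt (fun s => fderiv ℝ u (2 / (a + s), (a - s) / 2) (1, 0))
      (fderiv ℝ (fderiv ℝ u) (2 / (a + b), (a - b) / 2) (-2 / (a + b) ^ 2, -1 / 2) (1, 0)) b := by
    simpa [Function.comp_def] using (hasFDerivAt_dirDeriv hu hq ((1:ℝ),(0:ℝ))).comp_hasDerivAt b hc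
  have hU2c : HasDerivAt (fun s => fderiv ℝ u (2 / (a + s), (a - s) / 2) (0, 1))
      (fderiv ℝ (fderiv ℝ u) (2 / (a + b), (a - b) / 2) (-2 / (a + b) ^ 2, -1 / 2) (0, 1)) b := by
    simpa [Function.comp_def] using (hasFDerivAt_dirDeriv hu hq ((0:ℝ),(1:ℝ))).comp_hasDerivAt b hc
  have hE := ((huc.sub (hx1.mul hU1c)).add (hU2c.div hx1 hxne)).div_const 2
  have hfun : (fun s => E u (2 / (a + s), (a - s) / 2)) =
      fun s => (u (2 / (a + s), (a - s) / 2)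
        - 2 / (a + s) * fderiv ℝ u (2 / (a + s), (a - s) / 2) (1, 0)
        + fderiv ℝ u (2 / (a + s), (a - s) / 2) (0, 1) / (2 / (a + s))) / 2 := rfl
  rw [hfun]
  refine hE.congr_deriv (Eq.symm ?_)
  rw [clm_eval (fderiv ℝ u (2 / (a + b), (a - b) / 2)) (-2 / (a + b) ^ 2, -1 / 2),
    clm2_eval (fderiv ℝ (fderiv ℝ u) (2 / (a + b), (a - b) / 2)) (-2 / (a + b) ^ 2, -1/2) (1,0),
    clm2_eval (fderiv ℝ (fderiv ℝ u) (2 / (a + b), (a - b) / 2)) (-2 / (a + b) ^ 2, -1/2) (0,1)]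
  have hsym : fderiv ℝ (fderiv ℝ u) (2 / (a + b), (a - b) / 2) (1, 0) (0, 1)
      = fderiv ℝ (fderiv ℝ u) (2 / (a + b), (a - b) / 2) (0, 1) (1, 0) :=
    symm_mixed hu hq _ _
  have hpde : fderiv ℝ (fderiv ℝ u) (2 / (a + b), (a - b) / 2) (0, 1) (0, 1)
      = (2 / (a + b)) ^ 4 * fderiv ℝ (fderiv ℝ u) (2 / (a + b), (a - b) / 2) (1, 0) (1, 0) := by
    rw [← pdxx_eq hu hxpos, ← pdtt_eq hu hxpos]
    exact hwave _ _ hxpos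
  rw [hsym, hpde]
  set A := fderiv ℝ (fderiv ℝ u) (2 / (a + b), (a - b) / 2) (1, 0) (1, 0)
  set C := fderiv ℝ (fderiv ℝ u) (2 / (a + b), (a - b) / 2) (0, 1) (1, 0)
  set P := fderiv ℝ u (2 / (a + b), (a - b) / 2) (1, 0)
  set Q := fderiv ℝ u (2 / (a + b), (a - b) / 2) (0, 1)
  field_simp
  ring

lemma const_of_hasDerivAt_zero {g : ℝ → ℝ} {c : ℝ} (h : ∀ x ∈ Ioi c, HasDerivAt g 0 x)
    {x y : ℝ} (hx : x ∈ Ioi c) (hy : y ∈ Ioi c) : g x = g y := by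
  apply (convex_Ioi c).is_const_of_fderivWithin_eq_zero
    (fun z hz => (h z hz).differentiableAt.differentiableWithinAt) ?_ hx hy
  intro z hz
  rw [fderivWithin_of_isOpen isOpen_Ioi hz, (h z hz).hasFDerivAt.fderiv]
  ext
  simp

lemma hE1 (hu : ContDiffOn ℝ 2 u D) : ContDiffOn ℝ 1 (E u) D := by
  have hU1 : ContDiffOn ℝ 1 (fun q : ℝ × ℝ => fderiv ℝ u q (1, 0)) D :=
    (hu1 hu).clm_apply contDiffOn_const
  have hU2 : ContDiffOn ℝ 1 (fun q : ℝ × ℝ => fderiv ℝ u q (0, 1)) D :=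
    (hu1 hu).clm_apply contDiffOn_const
  have hfst : ContDiffOn ℝ 1 (fun q : ℝ × ℝ => q.1) D := contDiff_fst.contDiffOn
  exact (((hu.of_le one_le_two).sub (hfst.mul hU1)).add
    (hU2.div hfst (fun q hq => ne_of_gt hq))).div_const 2

abbrev Dw : Set (ℝ × ℝ) := {p : ℝ × ℝ | 0 < p.1 + p.2}

def w (u : ℝ × ℝ → ℝ) : ℝ × ℝ → ℝ :=
  fun p => (p.1 + p.2) / 2 * u (2 / (p.1 + p.2), (p.1 - p.2) / 2)

lemma stepA (hu : ContDiffOn ℝ 2 u D) {a b : ℝ} (hab : 0 < a + b) :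
    HasDerivAt (fun a' => w u (a', b)) (E u (2 / (a + b), (a - b) / 2)) a := by
  have hne : a + b ≠ 0 := ne_of_gt hab
  have hq : ((2 / (a + b), (a - b) / 2) : ℝ × ℝ) ∈ D := by
    show (0:ℝ) < 2 / (a + b); positivity
  have h1 : HasDerivAt (fun a' : ℝ => a' + b) 1 a := (hasDerivAt_id a).add_const b
  have hx : HasDerivAt (fun a' : ℝ => 2 / (a' + b)) (-2 / (a + b) ^ 2) a := by
    have := (hasDerivAt_const a (2:ℝ)).div h1 hne
    exact this.congr_deriv (by ring)
  have ht : HasDerivAt (fun a' : ℝ => (a' - b) / 2) (1 / 2) a := by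
    simpa using ((hasDerivAt_id a).sub_const b).div_const 2
  have hc : HasDerivAt (fun a' : ℝ => ((2 / (a' + b), (a' - b) / 2) : ℝ × ℝ))
      ((-2 / (a + b) ^ 2, 1 / 2) : ℝ × ℝ) a := hx.prodMk ht
  have huc : HasDerivAt (fun a' => u (2 / (a' + b), (a' - b) / 2))
      (fderiv ℝ u (2 / (a + b), (a - b) / 2) (-2 / (a + b) ^ 2, 1 / 2)) a :=
    (hud hu hq).hasFDerivAt.comp_hasDerivAt a hc
  have hlin : HasDerivAt (fun a' : ℝ => (a' + b) / 2) (1 / 2) a := by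
    simpa using h1.div_const 2
  have hprod := hlin.mul huc
  have hfun : (fun a' => w u (a', b)) =
      fun a' => (a' + b) / 2 * u (2 / (a' + b), (a' - b) / 2) := rfl
  rw [hfun]
  refine hprod.congr_deriv (Eq.symm ?_)
  rw [E, clm_eval (fderiv ℝ u (2 / (a + b), (a - b) / 2)) (-2 / (a + b) ^ 2, 1 / 2)]
  set P := fderiv ℝ u (2 / (a + b), (a - b) / 2) (1, 0)
  set Q := fderiv ℝ u (2 / (a + b), (a - b) / 2) (0, 1)
  field_simp
  ring

lemma isOpen_Dw : IsOpen Dw := isOpen_lt continuous_const (continuous_fst.add continuous_snd)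

lemma hwC2 (hu : ContDiffOn ℝ 2 u D) : ContDiffOn ℝ 2 (w u) Dw := by
  have hsum : ContDiffOn ℝ 2 (fun p : ℝ × ℝ => p.1 + p.2) Dw :=
    (contDiff_fst.add contDiff_snd).contDiffOn
  have hφ : ContDiffOn ℝ 2 (fun p : ℝ × ℝ => ((2 / (p.1 + p.2), (p.1 - p.2) / 2) : ℝ × ℝ)) Dw :=
    (contDiffOn_const.div hsum (fun p hp => ne_of_gt hp)).prodMk
      ((contDiff_fst.sub contDiff_snd).contDiffOn.div_const 2)
  have hmaps : MapsTo (fun p : ℝ × ℝ => ((2 / (p.1 + p.2), (p.1 - p.2) / 2) : ℝ × ℝ)) Dw D := by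
    intro p hp
    show (0:ℝ) < 2 / (p.1 + p.2)
    have : (0:ℝ) < p.1 + p.2 := hp
    positivity
  exact (hsum.div_const 2).mul (hu.comp hφ hmaps)

def fF (u : ℝ × ℝ → ℝ) : ℝ → ℝ := fun a => E u (1, a - 1)

def FF (u : ℝ × ℝ → ℝ) : ℝ → ℝ := fun a => ∫ s in (0:ℝ)..a, fF u s

def GG (u : ℝ × ℝ → ℝ) : ℝ → ℝ := fun b => w u (2 - b, b) - FF u (2 - b)

lemma hfF1 (hu : ContDiffOn ℝ 2 u D) : ContDiff ℝ 1 (fF u) := by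
  rw [← contDiffOn_univ]
  have hline : ContDiffOn ℝ 1 (fun a : ℝ => ((1, a - 1) : ℝ × ℝ)) univ :=
    (contDiff_const.prodMk (contDiff_id.sub contDiff_const)).contDiffOn
  exact (hE1 hu).comp hline (fun a _ => show (0:ℝ) < 1 by norm_num)

lemma hFF' (hu : ContDiffOn ℝ 2 u D) (a : ℝ) : HasDerivAt (FF u) (fF u a) a :=
  ((hfF1 hu).continuous.integral_hasStrictDerivAt 0 a).hasDerivAt

lemma hFF2 (hu : ContDiffOn ℝ 2 u D) : ContDiff ℝ 2 (FF u) := by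
  rw [show (2 : WithTop ℕ∞) = 1 + 1 by norm_num, contDiff_succ_iff_deriv]
  refine ⟨fun a => (hFF' hu a).differentiableAt, by simp, ?_⟩
  have : deriv (FF u) = fF u := funext fun a => (hFF' hu a).deriv
  rw [this]; exact hfF1 hu

lemma hGG2 (hu : ContDiffOn ℝ 2 u D) : ContDiff ℝ 2 (GG u) := by
  have hline : ContDiffOn ℝ 2 (fun b : ℝ => ((2 - b, b) : ℝ × ℝ)) univ :=
    ((contDiff_const.sub contDiff_id).prodMk contDiff_id).contDiffOn
  have h1 : ContDiff ℝ 2 (fun b : ℝ => w u (2 - b, b)) := by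
    rw [← contDiffOn_univ]
    exact (hwC2 hu).comp hline (fun b _ => show (0:ℝ) < 2 - b + b by norm_num)
  exact h1.sub ((hFF2 hu).comp (contDiff_const.sub contDiff_id))

lemma main_identity (hu : ContDiffOn ℝ 2 u D)
    (hwave : ∀ x t : ℝ, 0 < x → pdt (pdt u) (x, t) = x ^ 4 * pdx (pdx u) (x, t))
    {a b : ℝ} (hab : 0 < a + b) : w u (a, b) = FF u a + GG u b := by
  have key : ∀ a' ∈ Ioi (-b), HasDerivAt (fun a'' => w u (a'', b) - FF u a'') 0 a' := by
    intro a' ha'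
    have hab' : 0 < a' + b := by have := mem_Ioi.mp ha'; linarith
    have h1 := stepA hu hab'
    have h3 : E u (2 / (a' + b), (a' - b) / 2) = fF u a' := by
      have hb2 : b ∈ Ioi (-a') := mem_Ioi.mpr (by linarith)
      have h2a : 2 - a' ∈ Ioi (-a') := mem_Ioi.mpr (by linarith)
      have hconst := const_of_hasDerivAt_zero
        (g := fun s => E u (2 / (a' + s), (a' - s) / 2)) (c := -a')
        (fun s hs => stepB hu hwave (by have := mem_Ioi.mp hs; linarith)) hb2 h2a
      rw [hconst]
      show E u (2 / (a' + (2 - a')), (a' - (2 - a')) / 2) = E u (1, a' - 1)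
      norm_num
      ring_nf
    have h4 := h1.sub (hFF' hu a')
    rw [h3] at h4
    simpa [Pi.sub_def] using h4
  have ha : a ∈ Ioi (-b) := mem_Ioi.mpr (by linarith)
  have h2b : 2 - b ∈ Ioi (-b) := mem_Ioi.mpr (by linarith)
  have := const_of_hasDerivAt_zero key ha h2b
  have hG : GG u b = w u (2 - b, b) - FF u (2 - b) := rfl
  linarith [this]

end Wave15
end

theorem stmt_15 (u : ℝ × ℝ → ℝ)
    (hu : ContDiffOn ℝ 2 u {p : ℝ × ℝ | 0 < p.1})
    (hwave : ∀ x t : ℝ, 0 < x →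
      pdt (pdt u) (x, t) = x ^ 4 * pdx (pdx u) (x, t)) :
    ∃ F G : ℝ → ℝ, ContDiff ℝ 2 F ∧ ContDiff ℝ 2 G ∧
      ∀ x t : ℝ, 0 < x →
        u (x, t) = x * (F (1 / x + t) + G (1 / x - t)) := by
  refine ⟨Wave15.FF u, Wave15.GG u, Wave15.hFF2 hu, Wave15.hGG2 hu, ?_⟩
  intro x t hx
  have hxne : x ≠ 0 := ne_of_gt hx
  have hs : (1 / x + t) + (1 / x - t) = 2 / x := by ring
  have hab : 0 < (1 / x + t) + (1 / x - t) := by rw [hs]; positivity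
  have hmain := Wave15.main_identity hu hwave hab
  have h1 : (2 / x) / 2 = 1 / x := by ring
  have h2 : 2 / (2 / x) = x := by field_simp
  have h3 : ((1 / x + t) - (1 / x - t)) / 2 = t := by ring
  have hw : Wave15.w u (1 / x + t, 1 / x - t) = (1 / x) * u (x, t) := by
    show ((1 / x + t) + (1 / x - t)) / 2
        * u (2 / ((1 / x + t) + (1 / x - t)), ((1 / x + t) - (1 / x - t)) / 2) = _
    rw [hs, h1, h2, h3]
  rw [hw] at hmain
  have hx' : u (x, t) = x * (1 / x * u (x, t)) := by field_simp
  rw [hx', hmain]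
end
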